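/- arXiv:1806.01845 — 4 statements merged into one kernel-verified Lean document; each statement's English description precedes it below -/
import Mathlib

section
/- For any collection of subsets Y_1, ..., Y_I of R^m and any point y in the convex hull of the Minkowski sum Y_1 + ... + Y_I, there exists a subset S of {1,...,I} of cardinality at most m such that y belongs to the Minkowski sum of Y_i over i not in S plus the Minkowski sum of conv(Y_i) over i in S. -/
open scoped Pointwise BigOperators

lemma cone_carath {ι : Type} [Fintype ι] {E : Type*} [AddCommGroup E] [Module ℝ E]
    (v : ι → E) :
    ∀ (n : ℕ) (w : ι → ℝ), (Finset.univ.filter fun i => w i ≠ 0).card ≤ n → (∀ i, 0 ≤ w i) →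
    ∃ w' : ι → ℝ, (∀ i, 0 ≤ w' i) ∧ ∑ i, w' i • v i = ∑ i, w i • v i ∧
      LinearIndependent ℝ (fun j : {i // w' i ≠ 0} => v (j : ι)) := by
  classical
  intro n
  induction n with
  | zero =>
    intro w hcard hw
    refine ⟨w, hw, rfl, ?_⟩
    have hz : ∀ i, w i = 0 := by
      intro i
      by_contra h
      have hm : i ∈ Finset.univ.filter fun i => w i ≠ 0 := by simp [h]
      have := Finset.card_pos.mpr ⟨i, hm⟩
      omega
    have he : IsEmpty {i // w i ≠ 0} := ⟨fun j => j.2 (hz j.1)⟩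
    exact linearIndependent_empty_type
  | succ n ih =>
    intro w hcard hw
    by_cases hli : LinearIndependent ℝ (fun j : {i // w i ≠ 0} => v (j : ι))
    · exact ⟨w, hw, rfl, hli⟩
    obtain ⟨g, hg0, j₁, hj₁⟩ := Fintype.not_linearIndependent_iff.mp hli
    -- extend g to a relation c on ι supported in the support of w
    obtain ⟨d, hdsum, hdsupp, i₀, hi₀⟩ :
        ∃ d : ι → ℝ, ∑ i, d i • v i = 0 ∧ (∀ i, w i = 0 → d i = 0) ∧ ∃ i₀, 0 < d i₀ := by
      set c : ι → ℝ := fun i => if h : w i ≠ 0 then g ⟨i, h⟩ else 0 with hc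
      have hcs : ∑ i, c i • v i = 0 := by
        rw [← Finset.sum_filter_of_ne (p := fun i => w i ≠ 0)
          (fun i _ h => by by_contra hwi; exact h (by simp [hc, hwi]))]
        rw [Finset.sum_subtype (p := fun i => w i ≠ 0) _ (by simp) (fun i => c i • v i)]
        refine (Finset.sum_congr rfl fun x _ => ?_).trans hg0
        simp only [hc]
        rw [dif_pos x.2]
      have hcsupp : ∀ i, w i = 0 → c i = 0 := fun i hwi => by simp [hc, hwi]
      have hcj : c (j₁ : ι) ≠ 0 := by
        have hce : c (j₁ : ι) = g j₁ := by simp only [hc]; exact dif_pos j₁.2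
        rw [hce]; exact hj₁
      by_cases hpos : ∃ i, 0 < c i
      · exact ⟨c, hcs, hcsupp, hpos⟩
      · push_neg at hpos
        refine ⟨-c, by simpa using hcs, fun i hwi => by simp [hcsupp i hwi], (j₁ : ι), ?_⟩
        have := hpos (j₁ : ι)
        simp only [Pi.neg_apply]
        cases lt_or_eq_of_le this with
        | inl h => linarith
        | inr h => exact absurd h hcj
    -- take the minimal ratio
    have hT : (i₀ : ι) ∈ Finset.univ.filter fun i => 0 < d i := by simp [hi₀]
    obtain ⟨i₁, hi₁T, hi₁min⟩ := Finset.exists_min_image _ (fun i => w i / d i) ⟨i₀, hT⟩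
    have hdi₁ : 0 < d i₁ := by simpa using (Finset.mem_filter.mp hi₁T).2
    set r : ℝ := w i₁ / d i₁ with hr
    have hr0 : 0 ≤ r := div_nonneg (hw i₁) hdi₁.le
    set w₂ : ι → ℝ := fun i => w i - r * d i with hw₂
    have hw₂0 : ∀ i, 0 ≤ w₂ i := by
      intro i
      by_cases hdi : 0 < d i
      · have hle : r ≤ w i / d i := hi₁min i (by simp [hdi])
        have := (le_div_iff₀ hdi).mp hle
        simp [hw₂]; linarith
      · push_neg at hdi
        have : r * d i ≤ 0 := mul_nonpos_of_nonneg_of_nonpos hr0 hdi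
        have := hw i
        simp [hw₂]; nlinarith
    have hw₂sum : ∑ i, w₂ i • v i = ∑ i, w i • v i := by
      simp only [hw₂, sub_smul, Finset.sum_sub_distrib, mul_smul]
      rw [← Finset.smul_sum, hdsum, smul_zero, sub_zero]
    have hw₂supp : (Finset.univ.filter fun i => w₂ i ≠ 0) ⊆
        (Finset.univ.filter fun i => w i ≠ 0).erase i₁ := by
      intro i hi
      simp only [Finset.mem_filter, Finset.mem_univ, true_and] at hi
      have hwi : w i ≠ 0 := by
        intro h
        exact hi (by simp [hw₂, h, hdsupp i h])
      refine Finset.mem_erase.mpr ⟨?_, by simp [hwi]⟩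
      rintro rfl
      exact hi (by simp only [hw₂, hr]; rw [div_mul_cancel₀ _ hdi₁.ne', sub_self])
    have hwi₁ : w i₁ ≠ 0 := fun h => by
      have := hdsupp i₁ h; exact absurd this (ne_of_gt hdi₁)
    have hmem : i₁ ∈ Finset.univ.filter fun i => w i ≠ 0 := by simp [hwi₁]
    have hcard₂ : (Finset.univ.filter fun i => w₂ i ≠ 0).card ≤ n := by
      have h1 := Finset.card_le_card hw₂supp
      have h2 := Finset.card_erase_of_mem hmem
      have h3 := Finset.card_pos.mpr ⟨i₁, hmem⟩
      omega
    obtain ⟨w', hw'0, hw'sum, hw'li⟩ := ih w₂ hcard₂ hw₂0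
    exact ⟨w', hw'0, hw'sum.trans hw₂sum, hw'li⟩

/-- **Shapley–Folkman lemma.** For any collection of subsets `Y 1, ..., Y I` of `ℝ^m` and any
point `y` in the convex hull of the Minkowski sum `Y 1 + ⋯ + Y I`, there is a subset
`S ⊆ {1, ..., I}` of cardinality at most `m` such that `y` belongs to the Minkowski sum of the
`Y i` over `i ∉ S` plus the Minkowski sum of the convex hulls `conv (Y i)` over `i ∈ S`. -/
theorem shapley_folkman (m I : ℕ) (Y : Fin I → Set (Fin m → ℝ))
    (y : Fin m → ℝ) (hy : y ∈ convexHull ℝ (∑ i : Fin I, Y i)) :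
    ∃ S : Finset (Fin I), S.card ≤ m ∧
      y ∈ (∑ i ∈ Sᶜ, Y i) + ∑ i ∈ S, convexHull ℝ (Y i) := by
  classical
  rw [convexHull_sum] at hy
  obtain ⟨x, hx, hxy⟩ := (Set.mem_fintype_sum _ _).mp hy
  have hrep : ∀ i : Fin I, ∃ (n : ℕ) (w : Fin n → ℝ) (z : Fin n → (Fin m → ℝ)),
      (∀ j, 0 ≤ w j) ∧ ∑ j, w j = 1 ∧ (∀ j, z j ∈ Y i) ∧ ∑ j, w j • z j = x i := by
    intro i
    obtain ⟨κ₀, hκ₀, w, z, hw0, hw1, hz, hxz⟩ := mem_convexHull_iff_exists_fintype.mp (hx i)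
    letI := hκ₀
    let e : Fin (Fintype.card κ₀) ≃ κ₀ := (Fintype.equivFin κ₀).symm
    exact ⟨Fintype.card κ₀, w ∘ e, z ∘ e, fun j => hw0 _,
      (Equiv.sum_comp e w).trans hw1, fun j => hz _,
      (Equiv.sum_comp e fun k => w k • z k).trans hxz⟩
  choose n w z hw0 hw1 hz hxz using hrep
  set κ : Fin I → Type := fun i => Fin (n i) with hκdef
  set v : (Σ i : Fin I, κ i) → (Fin m → ℝ) × (Fin I → ℝ) :=
    fun p => (z p.1 p.2, Pi.single p.1 1) with hv
  set W : (Σ i : Fin I, κ i) → ℝ := fun p => w p.1 p.2 with hW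
  have hW0 : ∀ p, 0 ≤ W p := fun p => hw0 p.1 p.2
  obtain ⟨W', hW'0, hW'sum, hW'li⟩ :=
    cone_carath v (Finset.univ.filter fun p => W p ≠ 0).card W le_rfl hW0
  -- component formulas
  have hsnd : ∀ u : (Σ i : Fin I, κ i) → ℝ, ∀ i : Fin I,
      (∑ p, u p • v p).2 i = ∑ j : κ i, u ⟨i, j⟩ := by
    intro u i
    rw [Prod.snd_sum, Finset.sum_apply, ← Finset.univ_sigma_univ, Finset.sum_sigma]
    simp [hv, Prod.smul_mk, Prod.smul_snd, Pi.smul_apply, smul_eq_mul, Pi.single_apply, mul_ite, mul_one,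
      mul_zero, Finset.sum_ite_irrel, Finset.sum_ite_eq, Finset.sum_ite_eq']
  have hfst : ∀ u : (Σ i : Fin I, κ i) → ℝ,
      (∑ p, u p • v p).1 = ∑ i, ∑ j : κ i, u ⟨i, j⟩ • z i j := by
    intro u
    rw [Prod.fst_sum, ← Finset.univ_sigma_univ, Finset.sum_sigma]
    simp [hv, Prod.smul_mk, Prod.smul_fst]
  have hW'fiber : ∀ i : Fin I, ∑ j : κ i, W' ⟨i, j⟩ = 1 := by
    intro i
    rw [← hsnd W' i, hW'sum, hsnd W i]
    simpa [hW] using hw1 i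
  set x' : Fin I → (Fin m → ℝ) := fun i => ∑ j : κ i, W' ⟨i, j⟩ • z i j with hx'
  have hsum' : ∑ i, x' i = y := by
    have hfst' := congrArg Prod.fst hW'sum
    rw [hfst W', hfst W] at hfst'
    calc ∑ i, x' i = ∑ i : Fin I, ∑ j : κ i, W' ⟨i, j⟩ • z i j := rfl
      _ = ∑ i : Fin I, ∑ j : κ i, W ⟨i, j⟩ • z i j := hfst'
      _ = ∑ i, x i := Finset.sum_congr rfl fun i _ => hxz i
      _ = y := hxy
  have hx'conv : ∀ i, x' i ∈ convexHull ℝ (Y i) := fun i =>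
    mem_convexHull_of_exists_fintype (fun j => W' ⟨i, j⟩) (z i)
      (fun j => hW'0 _) (hW'fiber i) (hz i) rfl
  set σ : ∀ i : Fin I, Finset (κ i) := fun i => Finset.univ.filter fun j => W' ⟨i, j⟩ ≠ 0 with hσ
  have hσne : ∀ i, 1 ≤ (σ i).card := by
    intro i
    have h1 : ∑ j : κ i, W' ⟨i, j⟩ ≠ 0 := by rw [hW'fiber i]; norm_num
    obtain ⟨j, _, hj⟩ := Finset.exists_ne_zero_of_sum_ne_zero h1
    exact Finset.card_pos.mpr ⟨j, by simp [hσ, hj]⟩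
  -- total support bound
  have hcardle : (Finset.univ.filter fun p => W' p ≠ 0).card ≤ m + I := by
    have h1 := hW'li.fintype_card_le_finrank
    rw [Fintype.card_subtype] at h1
    have h2 : Module.finrank ℝ ((Fin m → ℝ) × (Fin I → ℝ)) = m + I := by
      rw [Module.finrank_prod, Module.finrank_fintype_fun_eq_card,
        Module.finrank_fintype_fun_eq_card, Fintype.card_fin, Fintype.card_fin]
    omega
  have hsplit : (Finset.univ.filter fun p => W' p ≠ 0).card = ∑ i, (σ i).card := by
    rw [Finset.card_filter, ← Finset.univ_sigma_univ, Finset.sum_sigma]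
    exact Finset.sum_congr rfl fun i _ => (Finset.card_filter _ _).symm
  set S : Finset (Fin I) := Finset.univ.filter fun i => 2 ≤ (σ i).card with hS
  have hScard : S.card ≤ m := by
    have hbound : ∑ i, (σ i).card ≤ m + I := hsplit ▸ hcardle
    have hlow : ∑ i : Fin I, (1 + if i ∈ S then 1 else 0) ≤ ∑ i, (σ i).card := by
      refine Finset.sum_le_sum fun i _ => ?_
      by_cases hiS : i ∈ S
      · have := (Finset.mem_filter.mp hiS).2; simp [hiS]; omega
      · simpa [hiS] using hσne i
    rw [Finset.sum_add_distrib, Finset.sum_const, Finset.sum_ite_mem,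
      Finset.univ_inter, Finset.sum_const] at hlow
    simp only [Finset.card_univ, Fintype.card_fin, smul_eq_mul, mul_one] at hlow
    omega
  refine ⟨S, hScard, ?_⟩
  have hx'mem : ∀ i ∉ S, x' i ∈ Y i := by
    intro i hiS
    have hc1 : (σ i).card = 1 := by
      have := hσne i
      have h2 : ¬ 2 ≤ (σ i).card := by simpa [hS] using hiS
      omega
    obtain ⟨j₀, hj₀⟩ := Finset.card_eq_one.mp hc1
    have hmem : W' ⟨i, j₀⟩ ≠ 0 := by
      have : j₀ ∈ σ i := hj₀ ▸ Finset.mem_singleton_self j₀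
      simpa [hσ] using this
    have hfilter : ∀ j : κ i, W' ⟨i, j⟩ ≠ 0 → j = j₀ := by
      intro j hj
      have : j ∈ σ i := by simp [hσ, hj]
      rw [hj₀] at this
      exact Finset.mem_singleton.mp this
    have hone : W' ⟨i, j₀⟩ = 1 := by
      have := hW'fiber i
      rw [← Finset.sum_filter_of_ne (p := fun j => W' ⟨i, j⟩ ≠ 0)
        (fun j _ hj => hj), show (Finset.univ.filter fun j => W' ⟨i, j⟩ ≠ 0) = {j₀} from hj₀,
        Finset.sum_singleton] at this
      exact this
    have : x' i = z i j₀ := by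
      show ∑ j : κ i, W' ⟨i, j⟩ • z i j = z i j₀
      rw [← Finset.sum_filter_of_ne (p := fun j => W' ⟨i, j⟩ ≠ 0)
        (fun j _ hj => by intro h; exact hj (by simp [h])),
        show (Finset.univ.filter fun j => W' ⟨i, j⟩ ≠ 0) = {j₀} from hj₀,
        Finset.sum_singleton, hone, one_smul]
    rw [this]
    exact hz i j₀
  have h1 : ∑ i ∈ Sᶜ, x' i ∈ ∑ i ∈ Sᶜ, Y i :=
    Set.finset_sum_mem_finset_sum _ _ _ fun i hi => hx'mem i (Finset.mem_compl.mp hi)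
  have h2 : ∑ i ∈ S, x' i ∈ ∑ i ∈ S, convexHull ℝ (Y i) :=
    Set.finset_sum_mem_finset_sum _ _ _ fun i _ => hx'conv i
  have := Set.add_mem_add h1 h2
  rwa [Finset.sum_compl_add_sum S x', hsum'] at this
end

section
/- Subdifferential of the nuclear norm: for a matrix Z with skinny SVD U Σ V^T, the subdifferential ∂‖Z‖_* equals {U V^T + T : U^T T = 0, T V = 0, ‖T‖ ≤ 1}. -/
open scoped BigOperators
open Matrix
open Polynomial

/-- The singular values of a real matrix: square roots of the eigenvalues of `Aᴴ * A`. -/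
noncomputable def singularValues {m n : ℕ} (A : Matrix (Fin m) (Fin n) ℝ) : Fin n → ℝ :=
  fun j => Real.sqrt ((show (Aᵀ * A).IsHermitian by
    simpa [Matrix.conjTranspose_eq_transpose_of_trivial] using
      Matrix.isHermitian_conjTranspose_mul_self A).eigenvalues j)

/-- The nuclear norm `‖A‖_* = Σ_i σ_i(A)`. -/
noncomputable def nuclearNorm {m n : ℕ} (A : Matrix (Fin m) (Fin n) ℝ) : ℝ :=
  ∑ j, singularValues A j

/-- The operator (spectral) norm `‖A‖ = σ_max(A)`. -/
noncomputable def opNorm {m n : ℕ} (A : Matrix (Fin m) (Fin n) ℝ) : ℝ :=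
  ⨆ j, singularValues A j

lemma herm_tt {m n : ℕ} (A : Matrix (Fin m) (Fin n) ℝ) : (Aᵀ * A).IsHermitian := by
  simpa [Matrix.conjTranspose_eq_transpose_of_trivial] using
    Matrix.isHermitian_conjTranspose_mul_self A

-- basic helpers
lemma dot_nonneg' {k : ℕ} (x : Fin k → ℝ) : 0 ≤ x ⬝ᵥ x :=
  Finset.sum_nonneg fun i _ => mul_self_nonneg _

lemma dot_cs {k : ℕ} (x y : Fin k → ℝ) :
    x ⬝ᵥ y ≤ Real.sqrt (x ⬝ᵥ x) * Real.sqrt (y ⬝ᵥ y) := by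
  have h := Finset.sum_mul_sq_le_sq_mul_sq Finset.univ x y
  have h1 : x ⬝ᵥ y ≤ Real.sqrt ((x ⬝ᵥ y) ^ 2) := by
    rw [Real.sqrt_sq_eq_abs]; exact le_abs_self _
  refine h1.trans ?_
  have hx : x ⬝ᵥ x = ∑ i, x i ^ 2 := by simp [dotProduct, pow_two]
  have hy : y ⬝ᵥ y = ∑ i, y i ^ 2 := by simp [dotProduct, pow_two]
  rw [hx, hy, ← Real.sqrt_mul (Finset.sum_nonneg fun i _ => sq_nonneg _)]
  exact Real.sqrt_le_sqrt h

lemma H1 {a b : ℕ} (M : Matrix (Fin a) (Fin b) ℝ) (x : Fin a → ℝ) (z : Fin b → ℝ) :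
    (Mᵀ *ᵥ x) ⬝ᵥ z = x ⬝ᵥ (M *ᵥ z) := by
  rw [Matrix.mulVec_transpose, ← Matrix.dotProduct_mulVec]

lemma diag_entry {a : ℕ} (u M : Matrix (Fin a) (Fin a) ℝ) (j : Fin a) :
    (uᵀ * M * u) j j = (fun k => u k j) ⬝ᵥ (M *ᵥ (fun k => u k j)) := by
  simp [Matrix.mul_apply, dotProduct, Matrix.mulVec, Finset.mul_sum, Finset.sum_mul]
  rw [Finset.sum_comm]
  congr 1; ext k; congr 1; ext l; ring

lemma charpoly_eval {k : ℕ} (A : Matrix (Fin k) (Fin k) ℝ) (x : ℝ) :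
    eval x A.charpoly = det (x • (1 : Matrix (Fin k) (Fin k) ℝ) - A) := by
  rw [Matrix.charpoly, ← Polynomial.coe_evalRingHom, RingHom.map_det]
  congr 1
  ext i j
  by_cases h : i = j
  · subst h
    simp [RingHom.mapMatrix_apply, Matrix.map_apply, Matrix.charmatrix_apply_eq, Matrix.one_apply]
  · simp [RingHom.mapMatrix_apply, Matrix.map_apply, Matrix.charmatrix_apply_ne _ _ _ h,
      Matrix.one_apply, h]

lemma herm_charpoly {k : ℕ} (A : Matrix (Fin k) (Fin k) ℝ) (hA : A.IsHermitian) :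
    A.charpoly = ((Finset.univ.val.map hA.eigenvalues).map fun a => X - C a).prod := by
  apply Polynomial.funext
  intro x
  rw [charpoly_eval]
  set u : Matrix (Fin k) (Fin k) ℝ := (Matrix.IsHermitian.eigenvectorUnitary hA : Matrix (Fin k) (Fin k) ℝ) with hu
  have hu1 : u * star u = 1 := Matrix.mem_unitaryGroup_iff.mp (Matrix.IsHermitian.eigenvectorUnitary hA).2
  have hu2 : star u * u = 1 := Matrix.mem_unitaryGroup_iff'.mp (Matrix.IsHermitian.eigenvectorUnitary hA).2
  have hsp : A = u * Matrix.diagonal hA.eigenvalues * star u := by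
    have := hA.spectral_theorem
    rwa [RCLike.ofReal_real_eq_id, Function.id_comp] at this
  have key : x • (1 : Matrix (Fin k) (Fin k) ℝ) - A
      = u * (x • (1 : Matrix (Fin k) (Fin k) ℝ) - Matrix.diagonal hA.eigenvalues) * star u := by
    rw [Matrix.mul_sub, Matrix.sub_mul, ← hsp]
    congr 1
    rw [Matrix.mul_smul, Matrix.smul_mul, mul_one, hu1]
  rw [key, det_mul, det_mul, mul_comm, ← mul_assoc, ← det_mul, hu2, det_one, one_mul]
  have hd : x • (1 : Matrix (Fin k) (Fin k) ℝ) - Matrix.diagonal hA.eigenvalues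
      = Matrix.diagonal (fun i => x - hA.eigenvalues i) := by
    ext i j
    by_cases h : i = j
    · subst h; simp [Matrix.one_apply]
    · simp [Matrix.one_apply, h, Matrix.diagonal_apply_ne _ h]
  rw [hd, Matrix.det_diagonal, Polynomial.eval_multiset_prod, Multiset.map_map, Multiset.map_map]
  simp [Finset.prod_eq_multiset_prod]

lemma r_le_n {n r : ℕ} (V : Matrix (Fin n) (Fin r) ℝ) (hV : Vᵀ * V = 1) : r ≤ n := by
  have hinj : Function.Injective V.mulVecLin := by
    intro a b hab
    have : Vᵀ *ᵥ (V *ᵥ a) = Vᵀ *ᵥ (V *ᵥ b) := by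
      simp only [Matrix.mulVecLin_apply] at hab; rw [hab]
    rwa [Matrix.mulVec_mulVec, Matrix.mulVec_mulVec, hV, Matrix.one_mulVec,
      Matrix.one_mulVec] at this
  have := LinearMap.finrank_le_finrank_of_injective hinj
  simpa [Module.finrank_fintype_fun_eq_card] using this

/-- Key multiset lemma: eigenvalues of `V * diagonal d * Vᵀ` are the `d i` padded with zeros. -/
lemma eig_multiset {n r : ℕ} (V : Matrix (Fin n) (Fin r) ℝ) (d : Fin r → ℝ)
    (hV : Vᵀ * V = 1) (A : Matrix (Fin n) (Fin n) ℝ) (hA : A.IsHermitian)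
    (hAeq : A = V * Matrix.diagonal d * Vᵀ) :
    Finset.univ.val.map hA.eigenvalues
      = Finset.univ.val.map d + Multiset.replicate (n - r) 0 := by
  have hrn : r ≤ n := r_le_n V hV
  have hpoly : A.charpoly
      = (((Finset.univ.val.map d + Multiset.replicate (n - r) 0)).map fun a => X - C a).prod := by
    apply Polynomial.eq_of_infinite_eval_eq
    apply Set.Infinite.mono (s := {x : ℝ | x ≠ 0})
    swap
    · exact Set.Finite.infinite_compl (Set.finite_singleton 0)
    intro x hx
    have hx0 : (x : ℝ) ≠ 0 := hx
    simp only [Set.mem_setOf_eq]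
    rw [charpoly_eval]
    -- LHS: det (x•1 - V D Vᵀ)
    have key : x • (1 : Matrix (Fin n) (Fin n) ℝ) - A
        = x • ((1 : Matrix (Fin n) (Fin n) ℝ) + V * ((-x⁻¹) • (Matrix.diagonal d * Vᵀ))) := by
      rw [smul_add, hAeq, Matrix.mul_smul, smul_smul, mul_neg, mul_inv_cancel₀ hx0,
        neg_one_smul, ← Matrix.mul_assoc, sub_eq_add_neg]
    rw [key, Matrix.det_smul, Matrix.det_one_add_mul_comm, Matrix.smul_mul, Matrix.mul_assoc,
      hV, Matrix.mul_one]
    have hdiag : (1 : Matrix (Fin r) (Fin r) ℝ) + (-x⁻¹) • Matrix.diagonal d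
        = Matrix.diagonal (fun i => 1 - x⁻¹ * d i) := by
      ext i j
      by_cases h : i = j
      · subst h; simp [Matrix.one_apply]; ring
      · simp [Matrix.one_apply, h, Matrix.diagonal_apply_ne _ h]
    rw [hdiag, Matrix.det_diagonal]
    -- RHS eval
    rw [Polynomial.eval_multiset_prod, Multiset.map_map, Multiset.map_add, Multiset.prod_add,
      Multiset.map_map, Multiset.map_replicate, Multiset.prod_replicate]
    simp only [Function.comp_apply, Polynomial.eval_sub, Polynomial.eval_X, Polynomial.eval_C,
      sub_zero]
    rw [← Finset.prod_eq_multiset_prod]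
    have hxn : x ^ n = x ^ (n - r) * x ^ r := by
      rw [← pow_add]; congr 1; omega
    have hxr : (∏ i : Fin r, (1 - x⁻¹ * d i)) * x ^ r = ∏ i : Fin r, (x - d i) := by
      have : (x : ℝ) ^ r = ∏ _i : Fin r, x := by
        simp [Finset.prod_const, Finset.card_univ]
      rw [this, ← Finset.prod_mul_distrib]
      apply Finset.prod_congr rfl
      intros i _
      field_simp
    rw [Fintype.card_fin, hxn, mul_assoc, mul_comm (x ^ r), hxr, mul_comm]
  rw [herm_charpoly A hA] at hpoly
  have := congrArg Polynomial.roots hpoly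
  rwa [Polynomial.roots_multiset_prod_X_sub_C, Polynomial.roots_multiset_prod_X_sub_C] at this

lemma sum_f_eig {n r : ℕ} (V : Matrix (Fin n) (Fin r) ℝ) (d : Fin r → ℝ)
    (hV : Vᵀ * V = 1) (A : Matrix (Fin n) (Fin n) ℝ) (hA : A.IsHermitian)
    (hAeq : A = V * Matrix.diagonal d * Vᵀ) (f : ℝ → ℝ) (hf0 : f 0 = 0) :
    ∑ j, f (hA.eigenvalues j) = ∑ i, f (d i) := by
  have h := eig_multiset V d hV A hA hAeq
  have h2 := congrArg (fun s => (Multiset.map f s).sum) h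
  simp only [Multiset.map_map, Multiset.map_add, Multiset.sum_add, Multiset.map_replicate,
    Multiset.sum_replicate, hf0, smul_zero, add_zero] at h2
  rw [Finset.sum_eq_multiset_sum, Finset.sum_eq_multiset_sum]
  simpa using h2

/-- Nuclear norm of `U * diagonal d * Vᵀ` with orthonormal columns and `d ≥ 0`. -/
lemma nn_UDV {m n r : ℕ} (U : Matrix (Fin m) (Fin r) ℝ) (V : Matrix (Fin n) (Fin r) ℝ)
    (hU : Uᵀ * U = 1) (hV : Vᵀ * V = 1) (d : Fin r → ℝ) (hd : ∀ i, 0 ≤ d i) :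
    nuclearNorm (U * Matrix.diagonal d * Vᵀ) = ∑ i, d i := by
  set A := U * Matrix.diagonal d * Vᵀ with hA
  have hAtA : Aᵀ * A = V * Matrix.diagonal (fun i => d i * d i) * Vᵀ := by
    rw [hA, Matrix.transpose_mul, Matrix.transpose_mul, Matrix.transpose_transpose,
      Matrix.diagonal_transpose]
    calc Vᵀᵀ * (Matrix.diagonal d * Uᵀ) * (U * Matrix.diagonal d * Vᵀ)
        = V * (Matrix.diagonal d * (Uᵀ * U) * Matrix.diagonal d) * Vᵀ := by
          rw [Matrix.transpose_transpose]; simp only [Matrix.mul_assoc]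
      _ = V * Matrix.diagonal (fun i => d i * d i) * Vᵀ := by
          rw [hU, Matrix.mul_one, Matrix.diagonal_mul_diagonal]
  unfold nuclearNorm singularValues
  rw [sum_f_eig V _ hV (Aᵀ * A) (herm_tt A) hAtA Real.sqrt
    Real.sqrt_zero]
  exact Finset.sum_congr rfl fun i _ => Real.sqrt_mul_self (hd i)

lemma nn_zero {m n : ℕ} : nuclearNorm (0 : Matrix (Fin m) (Fin n) ℝ) = 0 := by
  have h := nn_UDV (0 : Matrix (Fin m) (Fin 0) ℝ) (0 : Matrix (Fin n) (Fin 0) ℝ)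
    (Subsingleton.elim _ _) (Subsingleton.elim _ _) (fun i => 0) (fun i => le_refl _)
  simpa using h

lemma nn_vecMulVec {m n : ℕ} (x : Fin m → ℝ) (y : Fin n → ℝ) :
    nuclearNorm (Matrix.vecMulVec x y) = Real.sqrt (x ⬝ᵥ x) * Real.sqrt (y ⬝ᵥ y) := by
  by_cases hx : x = 0
  · subst hx
    have : Matrix.vecMulVec (0 : Fin m → ℝ) y = 0 := by ext i j; simp [Matrix.vecMulVec_apply]
    simp [this, nn_zero, zero_dotProduct]
  by_cases hy : y = 0
  · subst hy
    have : Matrix.vecMulVec x (0 : Fin n → ℝ) = 0 := by ext i j; simp [Matrix.vecMulVec_apply]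
    simp [this, nn_zero]
  have hyy : 0 < y ⬝ᵥ y := by
    rcases lt_or_eq_of_le (dot_nonneg' y) with h' | h'
    · exact h'
    · exact absurd h'.symm ((dotProduct_self_eq_zero (v := y)).not.mpr hy)
  have hxx : 0 ≤ x ⬝ᵥ x := dot_nonneg' x
  have hnn : Real.sqrt (y ⬝ᵥ y) * Real.sqrt (y ⬝ᵥ y) = y ⬝ᵥ y := Real.mul_self_sqrt hyy.le
  have hny0 : (0:ℝ) < Real.sqrt (y ⬝ᵥ y) := Real.sqrt_pos.mpr hyy
  set V1 : Matrix (Fin n) (Fin 1) ℝ :=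
    Matrix.of (fun i (_ : Fin 1) => y i / Real.sqrt (y ⬝ᵥ y)) with hV1
  have hV1o : V1ᵀ * V1 = 1 := by
    ext i j
    fin_cases i; fin_cases j
    simp only [Matrix.mul_apply, hV1, Matrix.of_apply, Matrix.transpose_apply,
      Matrix.one_apply_eq, div_mul_div_comm, ← Finset.sum_div]
    rw [show ∑ k, y k * y k = y ⬝ᵥ y from rfl, hnn, div_self hyy.ne']
  have key : (Matrix.vecMulVec x y)ᵀ * (Matrix.vecMulVec x y)
      = V1 * Matrix.diagonal (fun _ : Fin 1 => (x ⬝ᵥ x) * (y ⬝ᵥ y)) * V1ᵀ := by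
    ext i j
    have hl : ((Matrix.vecMulVec x y)ᵀ * Matrix.vecMulVec x y) i j
        = (x ⬝ᵥ x) * (y i * y j) := by
      simp only [Matrix.mul_apply, Matrix.transpose_apply, Matrix.vecMulVec_apply]
      rw [show x ⬝ᵥ x = ∑ k, x k * x k from rfl, Finset.sum_mul]
      apply Finset.sum_congr rfl
      intros; ring
    have hr : (V1 * Matrix.diagonal (fun _ : Fin 1 => (x ⬝ᵥ x) * (y ⬝ᵥ y)) * V1ᵀ) i j
        = (x ⬝ᵥ x) * (y i * y j) := by
      simp only [Matrix.mul_apply, Fin.sum_univ_one, Matrix.diagonal_apply_eq, hV1,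
        Matrix.of_apply, Matrix.transpose_apply]
      rw [show y i / Real.sqrt (y ⬝ᵥ y) * ((x ⬝ᵥ x) * (y ⬝ᵥ y)) * (y j / Real.sqrt (y ⬝ᵥ y))
          = (x ⬝ᵥ x) * (y i * y j)
            * ((y ⬝ᵥ y) / (Real.sqrt (y ⬝ᵥ y) * Real.sqrt (y ⬝ᵥ y))) from by ring, hnn,
        div_self hyy.ne', mul_one]
    rw [hl, hr]
  unfold nuclearNorm singularValues
  rw [sum_f_eig V1 _ hV1o _ (herm_tt _) key Real.sqrt
    Real.sqrt_zero, Fin.sum_univ_one, Real.sqrt_mul hxx]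

/-- Packaged real spectral theorem. -/
lemma spectral_pack {k : ℕ} (A : Matrix (Fin k) (Fin k) ℝ) (hA : A.IsHermitian) :
    ∃ u : Matrix (Fin k) (Fin k) ℝ, uᵀ * u = 1 ∧ u * uᵀ = 1 ∧
      A = u * Matrix.diagonal hA.eigenvalues * uᵀ := by
  refine ⟨(Matrix.IsHermitian.eigenvectorUnitary hA : Matrix (Fin k) (Fin k) ℝ), ?_, ?_, ?_⟩
  · have h := Matrix.mem_unitaryGroup_iff'.mp (Matrix.IsHermitian.eigenvectorUnitary hA).2
    rwa [Matrix.star_eq_conjTranspose, Matrix.conjTranspose_eq_transpose_of_trivial] at h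
  · have h := Matrix.mem_unitaryGroup_iff.mp (Matrix.IsHermitian.eigenvectorUnitary hA).2
    rwa [Matrix.star_eq_conjTranspose, Matrix.conjTranspose_eq_transpose_of_trivial] at h
  · have h := hA.spectral_theorem
    rwa [RCLike.ofReal_real_eq_id, Function.id_comp, Unitary.conjStarAlgAut_apply,
      Matrix.star_eq_conjTranspose,
      Matrix.conjTranspose_eq_transpose_of_trivial] at h

/-- Columns of the eigenvector unitary are unit eigenvectors. -/
lemma eig_column {k : ℕ} (A : Matrix (Fin k) (Fin k) ℝ) (hA : A.IsHermitian) (j : Fin k) :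
    ∃ q : Fin k → ℝ, q ⬝ᵥ q = 1 ∧ A *ᵥ q = hA.eigenvalues j • q := by
  obtain ⟨u, hu2, hu1, hsp⟩ := spectral_pack A hA
  generalize hgen : hA.eigenvalues = d at hsp ⊢
  have hAu : A * u = u * Matrix.diagonal d := by
    rw [hsp, Matrix.mul_assoc, Matrix.mul_assoc, hu2, Matrix.mul_one]
  refine ⟨fun i => u i j, ?_, ?_⟩
  · have h : (uᵀ * u) j j = (1 : Matrix (Fin k) (Fin k) ℝ) j j := by rw [hu2]
    simp only [Matrix.mul_apply, Matrix.transpose_apply, Matrix.one_apply_eq] at h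
    simpa [dotProduct] using h
  · funext i
    have h1 : (A * u) i j = (u * Matrix.diagonal d) i j := by rw [hAu]
    rw [Matrix.mul_apply, Matrix.mul_diagonal] at h1
    simpa [Matrix.mulVec, dotProduct, mul_comm] using h1

/-- Rayleigh-type bound. -/
lemma rayleigh {k : ℕ} (A : Matrix (Fin k) (Fin k) ℝ) (hA : A.IsHermitian) (c : ℝ)
    (hc : ∀ j, hA.eigenvalues j ≤ c) (x : Fin k → ℝ) :
    x ⬝ᵥ (A *ᵥ x) ≤ c * (x ⬝ᵥ x) := by
  obtain ⟨u, hu2, hu1, hsp⟩ := spectral_pack A hA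
  generalize hgen : hA.eigenvalues = d at hsp hc
  set w : Fin k → ℝ := uᵀ *ᵥ x with hw
  have h1 : x ⬝ᵥ (A *ᵥ x) = w ⬝ᵥ (Matrix.diagonal d *ᵥ w) := by
    rw [hsp, ← Matrix.mulVec_mulVec, ← Matrix.mulVec_mulVec, ← H1]
  have h2 : w ⬝ᵥ w = x ⬝ᵥ x := by
    rw [hw, H1, Matrix.mulVec_mulVec, hu1, Matrix.one_mulVec]
  rw [h1, ← h2]
  have h3 : ∀ i, w i * (Matrix.diagonal d *ᵥ w) i ≤ c * (w i * w i) := by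
    intro i
    rw [Matrix.mulVec_diagonal]
    have := mul_le_mul_of_nonneg_right (hc i) (mul_self_nonneg (w i))
    nlinarith [this]
  calc w ⬝ᵥ (Matrix.diagonal d *ᵥ w)
      ≤ ∑ i, c * (w i * w i) := Finset.sum_le_sum fun i _ => h3 i
    _ = c * (w ⬝ᵥ w) := by rw [dotProduct, Finset.mul_sum]

/-- Duality: if `xᵀ G y ≤ ‖x‖‖y‖` for all `x, y`, then `⟨G, W⟩ ≤ ‖W‖_*`. -/
lemma trace_le_nn {m n : ℕ} (G W : Matrix (Fin m) (Fin n) ℝ)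
    (hG : ∀ (x : Fin m → ℝ) (y : Fin n → ℝ),
      x ⬝ᵥ (G *ᵥ y) ≤ Real.sqrt (x ⬝ᵥ x) * Real.sqrt (y ⬝ᵥ y)) :
    (Gᵀ * W).trace ≤ nuclearNorm W := by
  have hA : (Wᵀ * W).IsHermitian := herm_tt W
  obtain ⟨u, hu2, hu1, hsp⟩ := spectral_pack (Wᵀ * W) hA
  have hAu : (Wᵀ * W) * u = u * Matrix.diagonal hA.eigenvalues := by
    conv_lhs => rw [hsp, Matrix.mul_assoc, Matrix.mul_assoc, hu2, Matrix.mul_one]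
  have htr : (Gᵀ * W).trace = (uᵀ * (Gᵀ * W) * u).trace := by
    rw [Matrix.trace_mul_cycle, ← Matrix.mul_assoc, hu1, Matrix.one_mul]
  rw [htr, Matrix.trace]
  apply Finset.sum_le_sum
  intro j _
  set q : Fin n → ℝ := fun i => u i j with hq
  have hq1 : q ⬝ᵥ q = 1 := by
    have h : (uᵀ * u) j j = (1 : Matrix (Fin n) (Fin n) ℝ) j j := by rw [hu2]
    simp only [Matrix.mul_apply, Matrix.transpose_apply, Matrix.one_apply_eq] at h
    simpa [dotProduct, hq] using h
  have hAq : (Wᵀ * W) *ᵥ q = hA.eigenvalues j • q := by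
    funext i
    have h1 : ((Wᵀ * W) * u) i j = (u * Matrix.diagonal hA.eigenvalues) i j := by rw [hAu]
    rw [Matrix.mul_apply, Matrix.mul_diagonal] at h1
    simpa [Matrix.mulVec, dotProduct, hq, mul_comm] using h1
  have hWq : (W *ᵥ q) ⬝ᵥ (W *ᵥ q) = hA.eigenvalues j := by
    have h := H1 W (W *ᵥ q) q
    rw [Matrix.mulVec_mulVec, hAq, smul_dotProduct, hq1, smul_eq_mul, mul_one] at h
    exact h.symm
  have hdiag : (uᵀ * (Gᵀ * W) * u).diag j = (W *ᵥ q) ⬝ᵥ (G *ᵥ q) := by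
    show (uᵀ * (Gᵀ * W) * u) j j = _
    rw [diag_entry, ← Matrix.mulVec_mulVec, dotProduct_comm, H1]
  rw [hdiag]
  calc (W *ᵥ q) ⬝ᵥ (G *ᵥ q)
      ≤ Real.sqrt ((W *ᵥ q) ⬝ᵥ (W *ᵥ q)) * Real.sqrt (q ⬝ᵥ q) := hG _ _
    _ = singularValues W j := by rw [hWq, hq1, Real.sqrt_one, mul_one]; rfl

lemma aux2 (A B C D : ℝ) (hA : 0 ≤ A) (hB : 0 ≤ B) (hC : 0 ≤ C) (hD : 0 ≤ D) :
    A * B + C * D ≤ Real.sqrt (A ^ 2 + C ^ 2) * Real.sqrt (B ^ 2 + D ^ 2) := by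
  have h1 : A * B + C * D ≤ Real.sqrt ((A * B + C * D) ^ 2) := by
    rw [Real.sqrt_sq_eq_abs]; exact le_abs_self _
  refine h1.trans ?_
  rw [← Real.sqrt_mul (by positivity)]
  apply Real.sqrt_le_sqrt
  nlinarith [sq_nonneg (A * D - C * B)]

lemma tt_psd {m n : ℕ} (T : Matrix (Fin m) (Fin n) ℝ) : (Tᵀ * T).PosSemidef := by
  have h := Matrix.posSemidef_conjTranspose_mul_self T
  rwa [Matrix.conjTranspose_eq_transpose_of_trivial] at h

lemma eig_le_one_of_opNorm {m n : ℕ} (T : Matrix (Fin m) (Fin n) ℝ) (hop : opNorm T ≤ 1)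
    (j : Fin n) : (herm_tt T).eigenvalues j ≤ 1 := by
  have h1 : singularValues T j ≤ opNorm T := by
    apply le_ciSup (f := singularValues T) (Set.Finite.bddAbove (Set.finite_range _))
  have h2 : singularValues T j ≤ 1 := h1.trans hop
  have h3 : 0 ≤ (herm_tt T).eigenvalues j :=
    (tt_psd T).eigenvalues_nonneg j
  unfold singularValues at h2
  nlinarith [Real.sq_sqrt h3, Real.sqrt_nonneg ((herm_tt T).eigenvalues j)]

lemma mulVec_sq_le {m n : ℕ} (T : Matrix (Fin m) (Fin n) ℝ) (hop : opNorm T ≤ 1)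
    (b : Fin n → ℝ) : (T *ᵥ b) ⬝ᵥ (T *ᵥ b) ≤ b ⬝ᵥ b := by
  have h1 : (T *ᵥ b) ⬝ᵥ (T *ᵥ b) = b ⬝ᵥ ((Tᵀ * T) *ᵥ b) := by
    rw [← Matrix.mulVec_mulVec, ← H1 T (T *ᵥ b) b, dotProduct_comm]
  rw [h1]
  have := rayleigh (Tᵀ * T) (herm_tt T) 1
    (eig_le_one_of_opNorm T hop) b
  linarith

lemma trace_outer {m n : ℕ} (G : Matrix (Fin m) (Fin n) ℝ) (x : Fin m → ℝ) (y : Fin n → ℝ) :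
    (Gᵀ * Matrix.vecMulVec x y).trace = x ⬝ᵥ (G *ᵥ y) := by
  simp only [Matrix.trace, Matrix.diag, Matrix.mul_apply, Matrix.vecMulVec_apply,
    Matrix.transpose_apply, Matrix.mulVec, dotProduct, Finset.mul_sum]
  rw [Finset.sum_comm]
  congr 1; ext i; congr 1; ext j; ring

lemma fwd_bound {m n r : ℕ} (U : Matrix (Fin m) (Fin r) ℝ) (V : Matrix (Fin n) (Fin r) ℝ)
    (hU : Uᵀ * U = 1) (hV : Vᵀ * V = 1) (T : Matrix (Fin m) (Fin n) ℝ)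
    (hUT : Uᵀ * T = 0) (hTV : T * V = 0) (hop : opNorm T ≤ 1)
    (x : Fin m → ℝ) (y : Fin n → ℝ) :
    x ⬝ᵥ ((U * Vᵀ + T) *ᵥ y) ≤ Real.sqrt (x ⬝ᵥ x) * Real.sqrt (y ⬝ᵥ y) := by
  set p : Fin r → ℝ := Uᵀ *ᵥ x with hp
  set a : Fin m → ℝ := x - U *ᵥ p with ha
  set q : Fin r → ℝ := Vᵀ *ᵥ y with hq
  set b : Fin n → ℝ := y - V *ᵥ q with hb
  have hUa : Uᵀ *ᵥ a = 0 := by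
    rw [ha, Matrix.mulVec_sub, Matrix.mulVec_mulVec, hU, Matrix.one_mulVec, sub_self]
  have hVb : Vᵀ *ᵥ b = 0 := by
    rw [hb, Matrix.mulVec_sub, Matrix.mulVec_mulVec, hV, Matrix.one_mulVec, sub_self]
  have hsplit : ∀ {k : ℕ} (M : Matrix (Fin k) (Fin r) ℝ) (z : Fin k → ℝ)
      (hM : Mᵀ * M = 1), z ⬝ᵥ z = (Mᵀ *ᵥ z) ⬝ᵥ (Mᵀ *ᵥ z)
        + (z - M *ᵥ (Mᵀ *ᵥ z)) ⬝ᵥ (z - M *ᵥ (Mᵀ *ᵥ z)) := by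
    intro k M z hM
    have hMa : Mᵀ *ᵥ (z - M *ᵥ (Mᵀ *ᵥ z)) = 0 := by
      rw [Matrix.mulVec_sub, Matrix.mulVec_mulVec, hM, Matrix.one_mulVec, sub_self]
    set w := Mᵀ *ᵥ z with hw
    set c := z - M *ᵥ w with hc
    have hz : z = c + M *ᵥ w := by rw [hc]; ring
    have h1 : c ⬝ᵥ (M *ᵥ w) = 0 := by rw [← H1 M c w, hMa, zero_dotProduct]
    have h2 : (M *ᵥ w) ⬝ᵥ c = 0 := by rw [dotProduct_comm]; exact h1
    have h3 : (M *ᵥ w) ⬝ᵥ (M *ᵥ w) = w ⬝ᵥ w := by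
      rw [← H1 M (M *ᵥ w) w, Matrix.mulVec_mulVec, hM, Matrix.one_mulVec]
    calc z ⬝ᵥ z = (c + M *ᵥ w) ⬝ᵥ (c + M *ᵥ w) := by rw [← hz]
      _ = c ⬝ᵥ c + c ⬝ᵥ (M *ᵥ w) + ((M *ᵥ w) ⬝ᵥ c + (M *ᵥ w) ⬝ᵥ (M *ᵥ w)) := by
          rw [add_dotProduct, dotProduct_add, dotProduct_add]
      _ = w ⬝ᵥ w + c ⬝ᵥ c := by rw [h1, h2, h3]; ring
  have hxs := hsplit U x hU
  have hys := hsplit V y hV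
  -- decompose the product
  have hGy : (U * Vᵀ + T) *ᵥ y = U *ᵥ q + T *ᵥ b := by
    rw [Matrix.add_mulVec, ← Matrix.mulVec_mulVec]
    congr 1
    rw [hb, Matrix.mulVec_sub, Matrix.mulVec_mulVec, hTV, Matrix.zero_mulVec, sub_zero]
  have hterm1 : x ⬝ᵥ (U *ᵥ q) = p ⬝ᵥ q := by rw [hp, H1]
  have hterm2 : x ⬝ᵥ (T *ᵥ b) = a ⬝ᵥ (T *ᵥ b) := by
    have hx : x = a + U *ᵥ p := by rw [ha]; ring
    have h4 : (U *ᵥ p) ⬝ᵥ (T *ᵥ b) = 0 := by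
      have h5 := H1 Uᵀ p (T *ᵥ b)
      rw [Matrix.transpose_transpose] at h5
      rw [h5, Matrix.mulVec_mulVec, hUT, Matrix.zero_mulVec, dotProduct_zero]
    conv_lhs => rw [hx, add_dotProduct, h4, add_zero]
  have hTb : (T *ᵥ b) ⬝ᵥ (T *ᵥ b) ≤ b ⬝ᵥ b := mulVec_sq_le T hop b
  have hcs1 : p ⬝ᵥ q ≤ Real.sqrt (p ⬝ᵥ p) * Real.sqrt (q ⬝ᵥ q) := dot_cs p q
  have hcs2 : a ⬝ᵥ (T *ᵥ b) ≤ Real.sqrt (a ⬝ᵥ a) * Real.sqrt (b ⬝ᵥ b) := by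
    have := dot_cs a (T *ᵥ b)
    have h6 : Real.sqrt ((T *ᵥ b) ⬝ᵥ (T *ᵥ b)) ≤ Real.sqrt (b ⬝ᵥ b) := Real.sqrt_le_sqrt hTb
    nlinarith [Real.sqrt_nonneg (a ⬝ᵥ a), Real.sqrt_nonneg ((T *ᵥ b) ⬝ᵥ (T *ᵥ b))]
  have hfin : Real.sqrt (p ⬝ᵥ p) * Real.sqrt (q ⬝ᵥ q) + Real.sqrt (a ⬝ᵥ a) * Real.sqrt (b ⬝ᵥ b)
      ≤ Real.sqrt (x ⬝ᵥ x) * Real.sqrt (y ⬝ᵥ y) := by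
    have h7 := aux2 (Real.sqrt (p ⬝ᵥ p)) (Real.sqrt (q ⬝ᵥ q)) (Real.sqrt (a ⬝ᵥ a))
      (Real.sqrt (b ⬝ᵥ b)) (Real.sqrt_nonneg _) (Real.sqrt_nonneg _) (Real.sqrt_nonneg _)
      (Real.sqrt_nonneg _)
    rw [Real.sq_sqrt (dot_nonneg' p), Real.sq_sqrt (dot_nonneg' q), Real.sq_sqrt (dot_nonneg' a),
      Real.sq_sqrt (dot_nonneg' b), ← hxs, ← hys] at h7
    exact h7
  calc x ⬝ᵥ ((U * Vᵀ + T) *ᵥ y) = p ⬝ᵥ q + a ⬝ᵥ (T *ᵥ b) := by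
        rw [hGy, dotProduct_add, hterm1, hterm2]
    _ ≤ Real.sqrt (p ⬝ᵥ p) * Real.sqrt (q ⬝ᵥ q) + Real.sqrt (a ⬝ᵥ a) * Real.sqrt (b ⬝ᵥ b) := by
        linarith
    _ ≤ _ := hfin

lemma cancel_sq {c d : ℝ} (hc : 0 ≤ c) (hd : 0 ≤ d)
    (h : c ≤ Real.sqrt c * Real.sqrt d) : c ≤ d := by
  rcases eq_or_ne c 0 with rfl | hne
  · exact hd
  · have ha : 0 < Real.sqrt c := Real.sqrt_pos.mpr (lt_of_le_of_ne hc (Ne.symm hne))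
    have h2 : Real.sqrt c ≤ Real.sqrt d := by
      have hc2 : Real.sqrt c * Real.sqrt c = c := Real.mul_self_sqrt hc
      nlinarith
    calc c = Real.sqrt c * Real.sqrt c := (Real.mul_self_sqrt hc).symm
      _ ≤ Real.sqrt d * Real.sqrt d := by nlinarith [Real.sqrt_nonneg d]
      _ = d := Real.mul_self_sqrt hd

/-- **Subdifferential of the nuclear norm.** Let `Z = U Σ Vᵀ` be a skinny SVD
(`Uᵀ U = 1`, `Vᵀ V = 1`, `Σ` diagonal with positive entries). Then the subdifferential of the
nuclear norm at `Z` equals `{U Vᵀ + T : Uᵀ T = 0, T V = 0, ‖T‖ ≤ 1}`. -/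
theorem subdifferential_nuclearNorm (m n r : ℕ)
    (Z : Matrix (Fin m) (Fin n) ℝ)
    (U : Matrix (Fin m) (Fin r) ℝ) (V : Matrix (Fin n) (Fin r) ℝ)
    (hU : Uᵀ * U = 1) (hV : Vᵀ * V = 1)
    (σ : Fin r → ℝ) (hσpos : ∀ i, 0 < σ i)
    (hZ : Z = U * Matrix.diagonal σ * Vᵀ) :
    {G : Matrix (Fin m) (Fin n) ℝ |
        ∀ W : Matrix (Fin m) (Fin n) ℝ,
          nuclearNorm Z + (Gᵀ * (W - Z)).trace ≤ nuclearNorm W} =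
      {G : Matrix (Fin m) (Fin n) ℝ |
        ∃ T : Matrix (Fin m) (Fin n) ℝ,
          Uᵀ * T = 0 ∧ T * V = 0 ∧ opNorm T ≤ 1 ∧ G = U * Vᵀ + T} := by
  have hZnn : nuclearNorm Z = ∑ i, σ i := by
    rw [hZ]; exact nn_UDV U V hU hV σ fun i => (hσpos i).le
  have htrdiag : ∀ (M : Matrix (Fin r) (Fin r) ℝ),
      (M * Matrix.diagonal σ).trace = ∑ i, M i i * σ i := by
    intro M
    simp [Matrix.trace, Matrix.diag, Matrix.mul_diagonal]
  -- ⟨G, Z⟩ as a weighted sum of `uᵢᵀ G vᵢ`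
  have htrZ : ∀ G : Matrix (Fin m) (Fin n) ℝ,
      (Gᵀ * Z).trace = ∑ i, σ i * ((fun k => U k i) ⬝ᵥ (G *ᵥ fun k => V k i)) := by
    intro G
    rw [hZ]
    have h0 : Gᵀ * (U * Matrix.diagonal σ * Vᵀ) = (Gᵀ * U) * Matrix.diagonal σ * Vᵀ := by
      simp only [Matrix.mul_assoc]
    rw [h0, Matrix.trace_mul_cycle, htrdiag]
    apply Finset.sum_congr rfl
    intro i _
    have hentry : (Vᵀ * (Gᵀ * U)) i i = (fun k => U k i) ⬝ᵥ (G *ᵥ fun k => V k i) := by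
      rw [← H1 G (fun k => U k i) (fun k => V k i), dotProduct_comm]
      simp only [Matrix.mul_apply, Matrix.mulVec, dotProduct, Matrix.transpose_apply]
    rw [hentry, mul_comm]
  -- trace of Gᵀ Z for G of the form U Vᵀ + T
  have htrZfwd : ∀ T : Matrix (Fin m) (Fin n) ℝ, Uᵀ * T = 0 →
      ((U * Vᵀ + T)ᵀ * Z).trace = ∑ i, σ i := by
    intro T hUT
    have hTU : Tᵀ * U = 0 := by
      have h := congrArg Matrix.transpose hUT
      rwa [Matrix.transpose_mul, Matrix.transpose_transpose, Matrix.transpose_zero] at h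
    have h1 : (U * Vᵀ + T)ᵀ * Z = V * (Matrix.diagonal σ * Vᵀ) := by
      rw [hZ, Matrix.transpose_add, Matrix.transpose_mul, Matrix.transpose_transpose]
      calc (Vᵀᵀ * Uᵀ + Tᵀ) * (U * Matrix.diagonal σ * Vᵀ)
          = V * ((Uᵀ * U) * (Matrix.diagonal σ * Vᵀ))
            + Tᵀ * U * (Matrix.diagonal σ * Vᵀ) := by
            rw [Matrix.transpose_transpose, Matrix.add_mul]
            simp only [Matrix.mul_assoc]
        _ = V * (Matrix.diagonal σ * Vᵀ) := by
            rw [hU, hTU, Matrix.one_mul, Matrix.zero_mul, add_zero]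
    rw [h1, ← Matrix.mul_assoc, Matrix.trace_mul_cycle, hV, Matrix.one_mul,
      Matrix.trace_diagonal]
  ext G
  simp only [Set.mem_setOf_eq]
  constructor
  · -- subgradient → structure
    intro hsub
    have hnn2 : nuclearNorm (Z + Z) = ∑ i, (σ i + σ i) := by
      have hZZ : Z + Z = U * Matrix.diagonal (fun i => σ i + σ i) * Vᵀ := by
        have hdd : Matrix.diagonal (fun i => σ i + σ i)
            = Matrix.diagonal σ + Matrix.diagonal σ := by
          rw [Matrix.diagonal_add]
        rw [hZ, hdd, Matrix.mul_add, Matrix.add_mul]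
      rw [hZZ]
      exact nn_UDV U V hU hV _ fun i => by linarith [hσpos i]
    have htrGZ : (Gᵀ * Z).trace = ∑ i, σ i := by
      have h1 := hsub 0
      rw [zero_sub, Matrix.mul_neg, Matrix.trace_neg, nn_zero, hZnn] at h1
      have h2 := hsub (Z + Z)
      rw [add_sub_cancel_right, hnn2, hZnn] at h2
      rw [Finset.sum_add_distrib] at h2
      linarith
    have hdual : ∀ W : Matrix (Fin m) (Fin n) ℝ, (Gᵀ * W).trace ≤ nuclearNorm W := by
      intro W
      have h := hsub W
      rw [Matrix.mul_sub, Matrix.trace_sub, hZnn, htrGZ] at h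
      linarith
    have hxy : ∀ (x : Fin m → ℝ) (y : Fin n → ℝ),
        x ⬝ᵥ (G *ᵥ y) ≤ Real.sqrt (x ⬝ᵥ x) * Real.sqrt (y ⬝ᵥ y) := by
      intro x y
      have h := hdual (Matrix.vecMulVec x y)
      rwa [trace_outer, nn_vecMulVec] at h
    have hGsq : ∀ (y : Fin n → ℝ), (G *ᵥ y) ⬝ᵥ (G *ᵥ y) ≤ y ⬝ᵥ y := by
      intro y
      exact cancel_sq (dot_nonneg' _) (dot_nonneg' _) (hxy (G *ᵥ y) y)
    have hGTsq : ∀ (x : Fin m → ℝ), (Gᵀ *ᵥ x) ⬝ᵥ (Gᵀ *ᵥ x) ≤ x ⬝ᵥ x := by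
      intro x
      apply cancel_sq (dot_nonneg' _) (dot_nonneg' _)
      rw [mul_comm]
      conv_lhs => rw [H1]
      exact hxy x (Gᵀ *ᵥ x)
    have hucol : ∀ i, (fun k => U k i) ⬝ᵥ (fun k => U k i) = 1 := by
      intro i
      have h : (Uᵀ * U) i i = (1 : Matrix (Fin r) (Fin r) ℝ) i i := by rw [hU]
      simp only [Matrix.mul_apply, Matrix.transpose_apply, Matrix.one_apply_eq] at h
      simpa [dotProduct] using h
    have hvcol : ∀ i, (fun k => V k i) ⬝ᵥ (fun k => V k i) = 1 := by
      intro i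
      have h : (Vᵀ * V) i i = (1 : Matrix (Fin r) (Fin r) ℝ) i i := by rw [hV]
      simp only [Matrix.mul_apply, Matrix.transpose_apply, Matrix.one_apply_eq] at h
      simpa [dotProduct] using h
    have he : ∀ i, (fun k => U k i) ⬝ᵥ (G *ᵥ fun k => V k i) = 1 := by
      have hsum : ∑ i, σ i * ((fun k => U k i) ⬝ᵥ (G *ᵥ fun k => V k i)) = ∑ i, σ i := by
        rw [← htrZ G, htrGZ]
      have hle : ∀ i, (fun k => U k i) ⬝ᵥ (G *ᵥ fun k => V k i) ≤ 1 := by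
        intro i
        have h := hxy (fun k => U k i) (fun k => V k i)
        rwa [hucol, hvcol, Real.sqrt_one, mul_one] at h
      have hz : ∑ i, σ i * (1 - ((fun k => U k i) ⬝ᵥ (G *ᵥ fun k => V k i))) = 0 := by
        have hrw : ∑ i, σ i * (1 - ((fun k => U k i) ⬝ᵥ (G *ᵥ fun k => V k i)))
            = ∑ i, σ i - ∑ i, σ i * ((fun k => U k i) ⬝ᵥ (G *ᵥ fun k => V k i)) := by
          rw [← Finset.sum_sub_distrib]
          apply Finset.sum_congr rfl
          intros; ring
        rw [hrw, hsum, sub_self]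
      intro i
      have h0 := (Finset.sum_eq_zero_iff_of_nonneg
        (fun i _ => mul_nonneg (hσpos i).le (by linarith [hle i]))).mp hz i (Finset.mem_univ i)
      rcases mul_eq_zero.mp h0 with h | h
      · exact absurd h (hσpos i).ne'
      · linarith
    have hGu : ∀ i, Gᵀ *ᵥ (fun k => U k i) = fun k => V k i := by
      intro i
      have h1 : (Gᵀ *ᵥ fun k => U k i) ⬝ᵥ (fun k => V k i) = 1 := by
        rw [H1]; exact he i
      have h2 : (Gᵀ *ᵥ fun k => U k i) ⬝ᵥ (Gᵀ *ᵥ fun k => U k i) ≤ 1 := by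
        have h := hGTsq (fun k => U k i)
        rwa [hucol] at h
      have h3 : ((Gᵀ *ᵥ fun k => U k i) - fun k => V k i) ⬝ᵥ
          ((Gᵀ *ᵥ fun k => U k i) - fun k => V k i) ≤ 0 := by
        rw [sub_dotProduct, dotProduct_sub, dotProduct_sub]
        have hc : (fun k => V k i) ⬝ᵥ (Gᵀ *ᵥ fun k => U k i)
            = (Gᵀ *ᵥ fun k => U k i) ⬝ᵥ (fun k => V k i) := dotProduct_comm _ _
        rw [hc, h1, hvcol]
        linarith
      have h4 := dotProduct_self_eq_zero.mp (le_antisymm h3 (dot_nonneg' _))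
      exact sub_eq_zero.mp h4
    have hGv : ∀ i, G *ᵥ (fun k => V k i) = fun k => U k i := by
      intro i
      have h1 : (fun k => U k i) ⬝ᵥ (G *ᵥ fun k => V k i) = 1 := he i
      have h2 : (G *ᵥ fun k => V k i) ⬝ᵥ (G *ᵥ fun k => V k i) ≤ 1 := by
        have h := hGsq (fun k => V k i)
        rwa [hvcol] at h
      have h3 : ((G *ᵥ fun k => V k i) - fun k => U k i) ⬝ᵥ
          ((G *ᵥ fun k => V k i) - fun k => U k i) ≤ 0 := by
        rw [sub_dotProduct, dotProduct_sub, dotProduct_sub]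
        have hc : (G *ᵥ fun k => V k i) ⬝ᵥ (fun k => U k i)
            = (fun k => U k i) ⬝ᵥ (G *ᵥ fun k => V k i) := dotProduct_comm _ _
        rw [hc, h1, hucol]
        linarith
      have h4 := dotProduct_self_eq_zero.mp (le_antisymm h3 (dot_nonneg' _))
      exact sub_eq_zero.mp h4
    have hUG : Uᵀ * G = Vᵀ := by
      ext i j
      have h := congrFun (hGu i) j
      simp only [Matrix.mulVec, dotProduct, Matrix.transpose_apply] at h ⊢
      rw [Matrix.mul_apply]
      rw [← h]
      apply Finset.sum_congr rfl
      intros; rw [Matrix.transpose_apply]; ring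
    have hGV : G * V = U := by
      ext i j
      have h := congrFun (hGv j) i
      simp only [Matrix.mulVec, dotProduct] at h ⊢
      rw [Matrix.mul_apply, ← h]
    refine ⟨G - U * Vᵀ, ?_, ?_, ?_, ?_⟩
    · rw [Matrix.mul_sub, hUG, ← Matrix.mul_assoc, hU, Matrix.one_mul, sub_self]
    · rw [Matrix.sub_mul, hGV, Matrix.mul_assoc, hV, Matrix.mul_one, sub_self]
    · -- operator norm bound
      have hGtU : Gᵀ * U = V := by
        have h := congrArg Matrix.transpose hUG
        rwa [Matrix.transpose_mul, Matrix.transpose_transpose, Matrix.transpose_transpose] at h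
      have hTT : (G - U * Vᵀ)ᵀ * (G - U * Vᵀ) = Gᵀ * G - V * Vᵀ := by
        rw [Matrix.transpose_sub, Matrix.transpose_mul, Matrix.transpose_transpose]
        calc (Gᵀ - Vᵀᵀ * Uᵀ) * (G - U * Vᵀ)
            = Gᵀ * G - (Gᵀ * U) * Vᵀ - (V * (Uᵀ * G) - V * ((Uᵀ * U) * Vᵀ)) := by
              rw [Matrix.transpose_transpose, Matrix.sub_mul, Matrix.mul_sub, Matrix.mul_sub]
              simp only [Matrix.mul_assoc]
          _ = Gᵀ * G - V * Vᵀ := by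
              rw [hGtU, hUG, hU, Matrix.one_mul, sub_self, sub_zero]
      unfold opNorm
      apply Real.iSup_le _ zero_le_one
      intro j
      unfold singularValues
      rw [show (1:ℝ) = Real.sqrt 1 from Real.sqrt_one.symm]
      apply Real.sqrt_le_sqrt
      obtain ⟨q, hq1, hq2⟩ := eig_column ((G - U * Vᵀ)ᵀ * (G - U * Vᵀ))
        (herm_tt _) j
      have heig : (herm_tt (G - U * Vᵀ)).eigenvalues j
          = q ⬝ᵥ (((G - U * Vᵀ)ᵀ * (G - U * Vᵀ)) *ᵥ q) := by
        rw [hq2, dotProduct_smul, hq1, smul_eq_mul, mul_one]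
      rw [heig, hTT, Matrix.sub_mulVec, dotProduct_sub]
      have hterm1 : q ⬝ᵥ ((Gᵀ * G) *ᵥ q) ≤ 1 := by
        rw [← Matrix.mulVec_mulVec, dotProduct_comm, H1]
        have h := hGsq q
        rwa [hq1] at h
      have hterm2 : 0 ≤ q ⬝ᵥ ((V * Vᵀ) *ᵥ q) := by
        have h := H1 Vᵀ (Vᵀ *ᵥ q) q
        rw [Matrix.transpose_transpose] at h
        rw [← Matrix.mulVec_mulVec, dotProduct_comm, h]
        exact dot_nonneg' _
      linarith
    · abel
  · -- structure → subgradient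
    rintro ⟨T, hUT, hTV, hop, rfl⟩
    intro W
    rw [Matrix.mul_sub, Matrix.trace_sub, hZnn, htrZfwd T hUT]
    have h := trace_le_nn (U * Vᵀ + T) W (fwd_bound U V hU hV T hUT hTV hop)
    linarith
end

section
/- Under the setting of the multi-branch problem, the duality gap satisfies 0 ≤ inf(P) − sup(D) ≤ (2/I) Δ_worst, where the primal is min_{w ∈ W_1×...×W_I} E[ℓ_τ(w; x, y)] subject to (1/I)Σ_i h_i(w_(i)) ≤ K with ℓ_τ the average of I branch losses, and Δ_worst bounds the per-branch gap between each branch objective and its convex relaxation. -/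
open scoped BigOperators
open MeasureTheory

open Filter
private lemma ivt_nat (S : ℕ → ℝ) (m : ℕ) (hm : 0 < m) (c : ℝ) (h0 : S 0 ≤ c) (hm' : c ≤ S m) :
    ∃ k, k < m ∧ ∃ t : ℝ, 0 ≤ t ∧ t ≤ 1 ∧ (1 - t) * S k + t * S (k + 1) = c := by
  classical
  set P : ℕ → Prop := fun j => S j ≤ c with hP
  set k := Nat.findGreatest P (m - 1) with hk
  have hkle : k ≤ m - 1 := Nat.findGreatest_le _
  have hkm : k < m := lt_of_le_of_lt hkle (by omega)
  have hPk : P k := Nat.findGreatest_spec (Nat.zero_le _) h0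
  have hck1 : c ≤ S (k + 1) := by
    by_cases hkm1 : k + 1 = m
    · rw [hkm1]; exact hm'
    · have hk1le : k + 1 ≤ m - 1 := by omega
      have := Nat.findGreatest_is_greatest (Nat.lt_succ_self k) hk1le
      exact le_of_not_ge this
  have hSk : S k ≤ c := hPk
  have hle : S k ≤ S (k + 1) := le_trans hSk hck1
  by_cases heq : S (k + 1) = S k
  · refine ⟨k, hkm, 0, le_refl _, zero_le_one, ?_⟩
    have : c = S k := le_antisymm (heq ▸ hck1) hSk
    simp [this]
  · have hlt : S k < S (k + 1) := lt_of_le_of_ne hle (Ne.symm heq)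
    refine ⟨k, hkm, (c - S k) / (S (k + 1) - S k), ?_, ?_, ?_⟩
    · apply div_nonneg (by linarith) (by linarith)
    · rw [div_le_one (by linarith)]; linarith
    · have hne : S (k + 1) - S k ≠ 0 := by linarith
      field_simp
      ring

private lemma sum_two {M : Type*} [AddCommMonoid M] {q : ℕ} (F : Fin (q+2) → M) (A B : M)
    (h0 : F 0 = A) (h1 : F 1 = B) (hrest : ∀ j, j ≠ 0 → j ≠ 1 → F j = 0) :
    ∑ j, F j = A + B := by
  have h01 : (0 : Fin (q+2)) ≠ 1 := Fin.ne_of_val_ne (by simp)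
  calc ∑ j, F j = ∑ j, ((if j = (0 : Fin (q+2)) then A else 0) + (if j = 1 then B else 0)) := by
        refine Finset.sum_congr rfl (fun j _ => ?_)
        by_cases hj0 : j = 0
        · simp [hj0, ← h0, h01]
        · by_cases hj1 : j = 1
          · simp [hj1, ← h1, hj0, Ne.symm h01]
          · simp [hj0, hj1, hrest j hj0 hj1]
    _ = A + B := by
        rw [Finset.sum_add_distrib, Finset.sum_ite_eq' Finset.univ (0 : Fin (q+2)) (fun _ => A),
          Finset.sum_ite_eq' Finset.univ (1 : Fin (q+2)) (fun _ => B)]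
        simp

private lemma two_point_combo {m : ℕ} (hm : 0 < m) (W : Set (Fin m → ℝ)) (x y : Fin m → ℝ)
    (hx : x ∈ W) (hy : y ∈ W) (t : ℝ) (ht0 : 0 ≤ t) (ht1 : t ≤ 1) (g : (Fin m → ℝ) → ℝ) :
    ∃ (a : Fin (m + 1) → ℝ) (u : Fin (m + 1) → (Fin m → ℝ)),
      (∀ j, 0 ≤ a j) ∧ (∑ j, a j) = 1 ∧ (∀ j, u j ∈ W) ∧
      (∑ j, a j • u j) = (1 - t) • x + t • y ∧
      (∑ j, a j * g (u j)) = (1 - t) * g x + t * g y := by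
  obtain ⟨q, rfl⟩ : ∃ q, m = q + 1 := ⟨m - 1, by omega⟩
  set a : Fin (q + 2) → ℝ := fun j => if j = 0 then 1 - t else if j = 1 then t else 0 with ha
  set u : Fin (q + 2) → (Fin (q + 1) → ℝ) := fun j => if j = 0 then x else y with hu
  have h01 : (0 : Fin (q+2)) ≠ 1 := Fin.ne_of_val_ne (by simp)
  refine ⟨a, u, ?_, ?_, ?_, ?_, ?_⟩
  · intro j
    simp only [ha]
    split_ifs <;> linarith
  · rw [sum_two a (1 - t) t (by simp [ha]) (by simp [ha, Ne.symm h01]) ?_]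
    · ring
    · intro j hj0 hj1; simp [ha, hj0, hj1]
  · intro j
    simp only [hu]
    split_ifs <;> assumption
  · refine sum_two _ ((1-t) • x) (t • y) (by simp [ha, hu]) (by simp [ha, hu, Ne.symm h01]) ?_
    intro j hj0 hj1; simp [ha, hj0, hj1]
  · refine sum_two _ ((1-t) * g x) (t * g y) (by simp [ha, hu]) (by simp [ha, hu, Ne.symm h01]) ?_
    intro j hj0 hj1; simp [ha, hj0, hj1]


set_option maxHeartbeats 1000000 in
/-- **Duality gap of multi-branch neural networks.** Consider `I` branches with compact convex
parameter sets `Wset i ⊆ ℝ^{p i}`, branch networks `f i` (continuous in the parameters),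
convex continuous regularizers `h i`, and data `(x, y) ∼ μ`. Under the margin assumption the
`τ`-hinge loss is linear, so the branch objective is `φ i w = E[1 − y · f i w x / τ]`. Let
`inf(P)` be the optimal value of the primal `min (1/I) Σ_i φ i (w i)` s.t.
`(1/I) Σ_i h i (w i) ≤ K`, and `sup(D)` the optimal value of its Lagrangian dual. With
`Δ i = sup_{w ∈ Wset i} (f̂ i w − f̃ i w)` (the gap between each branch objective and its convex
relaxation) and `Δ_worst = max_i Δ i`, the duality gap satisfies
`0 ≤ inf(P) − sup(D) ≤ (2/I) Δ_worst`. -/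
theorem multibranch_duality_gap
    (I : ℕ) (hI : 0 < I) (d0 : ℕ) (p : Fin I → ℕ)
    (Wset : ∀ i : Fin I, Set (Fin (p i) → ℝ))
    (hWcpt : ∀ i, IsCompact (Wset i)) (hWcvx : ∀ i, Convex ℝ (Wset i))
    {Ω : Type*} [MeasurableSpace Ω] (μ : Measure Ω) [IsProbabilityMeasure μ]
    (x : Ω → (Fin d0 → ℝ)) (y : Ω → ℝ) (τ : ℝ) (hτ : 0 < τ)
    (f : ∀ i : Fin I, (Fin (p i) → ℝ) → (Fin d0 → ℝ) → ℝ)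
    (hfcont : ∀ i ξ, Continuous fun w => f i w ξ)
    (h : ∀ i : Fin I, (Fin (p i) → ℝ) → ℝ)
    (hhcont : ∀ i, Continuous (h i)) (hhcvx : ∀ i, ConvexOn ℝ (Wset i) (h i))
    -- the branch objectives `φ i w = E[1 − y f_i(w; x)/τ]`
    (φ : ∀ i : Fin I, (Fin (p i) → ℝ) → ℝ)
    (hφ : ∀ i w, φ i w = ∫ ω, (1 - y ω * f i w (x ω) / τ) ∂μ)
    (hφint : ∀ i, ∀ w ∈ Wset i, Integrable (fun ω => 1 - y ω * f i w (x ω) / τ) μ)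
    (hφcont : ∀ i, ContinuousOn (φ i) (Wset i))
    (K : ℝ)
    -- the primal problem is feasible
    (hfeas : ∃ w : ∀ i : Fin I, Fin (p i) → ℝ, (∀ i, w i ∈ Wset i) ∧
      (1 / I : ℝ) * ∑ i, h i (w i) ≤ K)
    -- the convex relaxation `f̃ i` of the branch objective
    (ftilde : ∀ i : Fin I, (Fin (p i) → ℝ) → ℝ)
    (hftilde : ∀ i w, ftilde i w = sInf {v : ℝ |
      ∃ (a : Fin (p i + 1) → ℝ) (u : Fin (p i + 1) → (Fin (p i) → ℝ)),
        (∀ j, 0 ≤ a j) ∧ (∑ j, a j) = 1 ∧ (∀ j, u j ∈ Wset i) ∧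
        (∑ j, a j • u j) = w ∧ v = ∑ j, a j * φ i (u j)})
    -- the constrained branch objective `f̂ i`
    (fhat : ∀ i : Fin I, (Fin (p i) → ℝ) → ℝ)
    (hfhat : ∀ i w, fhat i w = sInf {v : ℝ | ∃ u ∈ Wset i, h i u ≤ h i w ∧ v = φ i u})
    -- the per-branch non-convexity gaps and the worst one
    (Δ : Fin I → ℝ)
    (hΔ : ∀ i, Δ i = sSup {v : ℝ | ∃ w ∈ Wset i, v = fhat i w - ftilde i w})
    (Δworst : ℝ) (hΔworst : Δworst = sSup (Set.range Δ))
    -- the primal and dual optimal values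
    (infP : ℝ)
    (hinfP : infP = sInf {v : ℝ | ∃ w : ∀ i : Fin I, Fin (p i) → ℝ,
      (∀ i, w i ∈ Wset i) ∧ (1 / I : ℝ) * ∑ i, h i (w i) ≤ K ∧
      v = (1 / I : ℝ) * ∑ i, φ i (w i)})
    (supD : ℝ)
    (hsupD : supD = sSup {v : ℝ | ∃ lam : ℝ, 0 ≤ lam ∧
      v = sInf {u : ℝ | ∃ w : ∀ i : Fin I, Fin (p i) → ℝ, (∀ i, w i ∈ Wset i) ∧
        u = (1 / I : ℝ) * ∑ i, φ i (w i) + (lam / I) * ∑ i, h i (w i) - lam * K}}) :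
    0 ≤ infP - supD ∧ infP - supD ≤ (2 / I : ℝ) * Δworst := by
  classical
  obtain ⟨wbar, hwbW, hwbK⟩ := hfeas
  have hIR : (0:ℝ) < I := by exact_mod_cast hI
  have hIne : (I:ℝ) ≠ 0 := ne_of_gt hIR
  have h1Ipos : (0:ℝ) < 1 / I := by positivity
  have hWne : ∀ i, (Wset i).Nonempty := fun i => ⟨wbar i, hwbW i⟩
  -- Lagrangian minimizers for every multiplier
  have hmsall : ∀ lam : ℝ, ∀ i, ∃ z ∈ Wset i, ∀ v ∈ Wset i,
      φ i z + lam * h i z ≤ φ i v + lam * h i v := by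
    intro lam i
    obtain ⟨z, hz, hz2⟩ := (hWcpt i).exists_isMinOn (hWne i)
      ((hφcont i).add ((continuous_const.mul (hhcont i)).continuousOn))
    exact ⟨z, hz, fun v hv => (isMinOn_iff.mp hz2) v hv⟩
  choose ms hmsW hmsMin using hmsall
  -- maximizers of φ
  have hmaxall : ∀ i, ∃ z ∈ Wset i, ∀ v ∈ Wset i, φ i v ≤ φ i z := by
    intro i
    obtain ⟨z, hz, hz2⟩ := (hWcpt i).exists_isMaxOn (hWne i) (hφcont i)
    exact ⟨z, hz, fun v hv => (isMaxOn_iff.mp hz2) v hv⟩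
  choose zmax hzmaxW hzmax using hmaxall
  -- φ-minimizers (λ = 0)
  have hzminW : ∀ i, ms 0 i ∈ Wset i := hmsW 0
  have hzmin : ∀ i, ∀ v ∈ Wset i, φ i (ms 0 i) ≤ φ i v := by
    intro i v hv; have := hmsMin 0 i v hv; simpa using this
  -- lower bound for convex-combination values
  have hcombo_lb : ∀ i (a : Fin (p i + 1) → ℝ) (uu : Fin (p i + 1) → (Fin (p i) → ℝ)),
      (∀ j, 0 ≤ a j) → (∑ j, a j) = 1 → (∀ j, uu j ∈ Wset i) →
      φ i (ms 0 i) ≤ ∑ j, a j * φ i (uu j) := by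
    intro i a uu ha0 ha1 huW
    calc φ i (ms 0 i) = ∑ j, a j * φ i (ms 0 i) := by rw [← Finset.sum_mul, ha1, one_mul]
      _ ≤ ∑ j, a j * φ i (uu j) := Finset.sum_le_sum
          (fun j _ => mul_le_mul_of_nonneg_left (hzmin i (uu j) (huW j)) (ha0 j))
  have hftilde_setlb : ∀ i (w' : Fin (p i) → ℝ), ∀ v ∈ {v : ℝ |
      ∃ (a : Fin (p i + 1) → ℝ) (u : Fin (p i + 1) → (Fin (p i) → ℝ)),
        (∀ j, 0 ≤ a j) ∧ (∑ j, a j) = 1 ∧ (∀ j, u j ∈ Wset i) ∧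
        (∑ j, a j • u j) = w' ∧ v = ∑ j, a j * φ i (u j)}, φ i (ms 0 i) ≤ v := by
    rintro i w' v ⟨a, uu, ha0, ha1, huW, -, rfl⟩
    exact hcombo_lb i a uu ha0 ha1 huW
  have hftilde_mem : ∀ i, ∀ w ∈ Wset i, (φ i w) ∈ {v : ℝ |
      ∃ (a : Fin (p i + 1) → ℝ) (u : Fin (p i + 1) → (Fin (p i) → ℝ)),
        (∀ j, 0 ≤ a j) ∧ (∑ j, a j) = 1 ∧ (∀ j, u j ∈ Wset i) ∧
        (∑ j, a j • u j) = w ∧ v = ∑ j, a j * φ i (u j)} := by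
    intro i w hw
    refine ⟨fun j => if j = 0 then 1 else 0, fun _ => w, ?_, by simp, fun _ => hw, ?_, ?_⟩
    · intro j
      show (0:ℝ) ≤ if j = 0 then 1 else 0
      split_ifs <;> norm_num
    · rw [Finset.sum_congr rfl (fun j (_ : j ∈ Finset.univ) => by
        show (if j = 0 then (1:ℝ) else 0) • w = if j = (0 : Fin (p i + 1)) then w else 0
        split_ifs <;> simp)]
      simp
    · rw [Finset.sum_congr rfl (fun j (_ : j ∈ Finset.univ) => by
        show (if j = 0 then (1:ℝ) else 0) * φ i w = if j = (0 : Fin (p i + 1)) then φ i w else 0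
        split_ifs <;> simp)]
      simp
  have hftilde_lb : ∀ i, ∀ w ∈ Wset i, φ i (ms 0 i) ≤ ftilde i w := by
    intro i w hw
    rw [hftilde]
    exact le_csInf ⟨φ i w, hftilde_mem i w hw⟩ (hftilde_setlb i w)
  have hftilde_ub : ∀ i, ∀ w ∈ Wset i, ftilde i w ≤ φ i w := by
    intro i w hw
    rw [hftilde]
    exact csInf_le ⟨φ i (ms 0 i), hftilde_setlb i w⟩ (hftilde_mem i w hw)
  -- fhat facts
  have hfhat_setlb : ∀ i (w' : Fin (p i) → ℝ), ∀ v ∈ {v : ℝ | ∃ u ∈ Wset i,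
      h i u ≤ h i w' ∧ v = φ i u}, φ i (ms 0 i) ≤ v := by
    rintro i w' v ⟨u, hu, -, rfl⟩
    exact hzmin i u hu
  have hfhat_mem : ∀ i (w : Fin (p i) → ℝ), w ∈ Wset i → (φ i w) ∈ {v : ℝ | ∃ u ∈ Wset i,
      h i u ≤ h i w ∧ v = φ i u} := fun i w hw => ⟨w, hw, le_refl _, rfl⟩
  have hfhat_le : ∀ i, ∀ w ∈ Wset i, fhat i w ≤ φ i w := by
    intro i w hw
    rw [hfhat]
    exact csInf_le ⟨φ i (ms 0 i), hfhat_setlb i w⟩ (hfhat_mem i w hw)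
  have hfhat_lb : ∀ i, ∀ w ∈ Wset i, φ i (ms 0 i) ≤ fhat i w := by
    intro i w hw
    rw [hfhat]
    exact le_csInf ⟨φ i w, hfhat_mem i w hw⟩ (hfhat_setlb i w)
  -- Δ facts
  have hΔ_ge : ∀ i, ∀ w ∈ Wset i, fhat i w - ftilde i w ≤ Δ i := by
    intro i w hw
    rw [hΔ]
    refine le_csSup ⟨φ i (zmax i) - φ i (ms 0 i), ?_⟩ ⟨w, hw, rfl⟩
    rintro v ⟨z, hz, rfl⟩
    have h1 := hfhat_le i z hz
    have h2 := hftilde_lb i z hz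
    have h3 := hzmax i z hz
    linarith
  have hΔnn : ∀ i, 0 ≤ Δ i := by
    intro i
    refine le_trans ?_ (hΔ_ge i (ms 0 i) (hzminW i))
    have h1 := hfhat_lb i (ms 0 i) (hzminW i)
    have h2 := hftilde_ub i (ms 0 i) (hzminW i)
    linarith
  have hΔw_ge : ∀ i, Δ i ≤ Δworst := by
    intro i
    rw [hΔworst]
    exact le_csSup (Set.finite_range Δ).bddAbove ⟨i, rfl⟩
  have hΔwnn : 0 ≤ Δworst := le_trans (hΔnn ⟨0, hI⟩) (hΔw_ge ⟨0, hI⟩)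
  -- primal facts
  have hPmem : ∀ w : ∀ i : Fin I, Fin (p i) → ℝ, (∀ i, w i ∈ Wset i) →
      (1 / I : ℝ) * ∑ i, h i (w i) ≤ K → infP ≤ (1 / I : ℝ) * ∑ i, φ i (w i) := by
    intro w hW hK
    rw [hinfP]
    refine csInf_le ⟨(1/I:ℝ) * ∑ i, φ i (ms 0 i), ?_⟩ ⟨w, hW, hK, rfl⟩
    rintro v ⟨z, hz, -, rfl⟩
    exact mul_le_mul_of_nonneg_left
      (Finset.sum_le_sum (fun i _ => hzmin i _ (hz i))) (le_of_lt h1Ipos)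
  -- dual facts
  have hdlow : ∀ lam : ℝ, ∀ w' : ∀ i : Fin I, Fin (p i) → ℝ, (∀ i, w' i ∈ Wset i) →
      (∀ i, ∀ v ∈ Wset i, φ i (w' i) + lam * h i (w' i) ≤ φ i v + lam * h i v) →
      ∀ u ∈ {u : ℝ | ∃ w : ∀ i : Fin I, Fin (p i) → ℝ, (∀ i, w i ∈ Wset i) ∧
        u = (1 / I : ℝ) * ∑ i, φ i (w i) + (lam / I) * ∑ i, h i (w i) - lam * K},
      (1/I:ℝ) * (∑ i, (φ i (w' i) + lam * h i (w' i))) - lam * K ≤ u := by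
    rintro lam w' hw'W hw'Min u ⟨z, hz, rfl⟩
    have hsum : ∑ i, (φ i (w' i) + lam * h i (w' i)) ≤ ∑ i, (φ i (z i) + lam * h i (z i)) :=
      Finset.sum_le_sum (fun i _ => hw'Min i _ (hz i))
    have hmul := mul_le_mul_of_nonneg_left hsum (le_of_lt h1Ipos)
    have hsplit : (1/I:ℝ) * ∑ i, (φ i (z i) + lam * h i (z i)) =
        (1/I:ℝ) * ∑ i, φ i (z i) + (lam/I) * ∑ i, h i (z i) := by
      rw [Finset.sum_add_distrib, ← Finset.mul_sum]; ring
    linarith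
  have hdne : ∀ lam : ℝ, Set.Nonempty {u : ℝ | ∃ w : ∀ i : Fin I, Fin (p i) → ℝ,
      (∀ i, w i ∈ Wset i) ∧
      u = (1 / I : ℝ) * ∑ i, φ i (w i) + (lam / I) * ∑ i, h i (w i) - lam * K} :=
    fun lam => ⟨_, ⟨wbar, hwbW, rfl⟩⟩
  have hd_ge : ∀ lam : ℝ, ∀ w' : ∀ i : Fin I, Fin (p i) → ℝ, (∀ i, w' i ∈ Wset i) →
      (∀ i, ∀ v ∈ Wset i, φ i (w' i) + lam * h i (w' i) ≤ φ i v + lam * h i v) →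
      (1/I:ℝ) * (∑ i, (φ i (w' i) + lam * h i (w' i))) - lam * K ≤
      sInf {u : ℝ | ∃ w : ∀ i : Fin I, Fin (p i) → ℝ, (∀ i, w i ∈ Wset i) ∧
        u = (1 / I : ℝ) * ∑ i, φ i (w i) + (lam / I) * ∑ i, h i (w i) - lam * K} :=
    fun lam w' h1 h2 => le_csInf (hdne lam) (hdlow lam w' h1 h2)
  have hd_le_infP : ∀ lam : ℝ, 0 ≤ lam →
      sInf {u : ℝ | ∃ w : ∀ i : Fin I, Fin (p i) → ℝ, (∀ i, w i ∈ Wset i) ∧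
        u = (1 / I : ℝ) * ∑ i, φ i (w i) + (lam / I) * ∑ i, h i (w i) - lam * K} ≤ infP := by
    intro lam hlam
    rw [hinfP]
    refine le_csInf ⟨_, ⟨wbar, hwbW, hwbK, rfl⟩⟩ ?_
    rintro v ⟨w, hW, hK, rfl⟩
    refine le_trans (csInf_le ⟨_, hdlow lam (ms lam) (hmsW lam) (hmsMin lam)⟩ ⟨w, hW, rfl⟩) ?_
    have h2 : lam * ((1/I:ℝ) * ∑ i, h i (w i) - K) ≤ 0 :=
      mul_nonpos_of_nonneg_of_nonpos hlam (by linarith)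
    have h3 : lam / (I:ℝ) * ∑ i, h i (w i) - lam * K =
        lam * ((1/I:ℝ) * ∑ i, h i (w i) - K) := by ring
    linarith
  have hsupD_le_infP : supD ≤ infP := by
    rw [hsupD]
    refine csSup_le ⟨_, ⟨0, le_refl 0, rfl⟩⟩ ?_
    rintro v ⟨lam, hlam, rfl⟩
    exact hd_le_infP lam hlam
  have hd_le_supD : ∀ lam : ℝ, 0 ≤ lam →
      sInf {u : ℝ | ∃ w : ∀ i : Fin I, Fin (p i) → ℝ, (∀ i, w i ∈ Wset i) ∧
        u = (1 / I : ℝ) * ∑ i, φ i (w i) + (lam / I) * ∑ i, h i (w i) - lam * K} ≤ supD := by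
    intro lam hlam
    rw [hsupD]
    refine le_csSup ⟨infP, ?_⟩ ⟨lam, hlam, rfl⟩
    rintro v ⟨lam', hlam', rfl⟩
    exact hd_le_infP lam' hlam'
    -- the mixing construction: two minimizer families at the same multiplier whose total
  -- regularizer values straddle I*K give a nearly optimal feasible point
  have mix : ∀ lam : ℝ, 0 ≤ lam → ∀ w u : ∀ i : Fin I, Fin (p i) → ℝ,
      (∀ i, w i ∈ Wset i) →
      (∀ i, ∀ v ∈ Wset i, φ i (w i) + lam * h i (w i) ≤ φ i v + lam * h i v) →
      (∀ i, u i ∈ Wset i) →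
      (∀ i, ∀ v ∈ Wset i, φ i (u i) + lam * h i (u i) ≤ φ i v + lam * h i v) →
      (∑ i, h i (w i)) ≤ I * K → (I : ℝ) * K ≤ (∑ i, h i (u i)) →
      infP ≤ supD + Δworst / I := by
    intro lam hlam w u hwW hwMin huW huMin hwK huK
    refine le_of_forall_pos_le_add ?_
    intro ε hε
    set S : ℕ → ℝ := fun k => ∑ i : Fin I, (if (i:ℕ) < k then h i (u i) else h i (w i)) with hS
    have hS0 : S 0 = ∑ i, h i (w i) := by simp [hS]
    have hSI : S I = ∑ i, h i (u i) := Finset.sum_congr rfl (fun i _ => if_pos i.isLt)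
    obtain ⟨k, hkI, t, ht0, ht1, hSt⟩ := ivt_nat S I hI ((I:ℝ) * K)
      (by rw [hS0]; exact hwK) (by rw [hSI]; exact huK)
    set j : Fin I := ⟨k, hkI⟩ with hjdef
    have hjval : (j : ℕ) = k := rfl
    set r : ℝ := (1 - t) * h j (w j) + t * h j (u j) with hr
    set tphi : ℝ := (1 - t) * φ j (w j) + t * φ j (u j) with htphi
    set what : Fin (p j) → ℝ := (1 - t) • w j + t • u j with hwhat
    have hwhatW : what ∈ Wset j :=
      hWcvx j (hwW j) (huW j) (by linarith) ht0 (by ring)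
    have hwhath : h j what ≤ r :=
      (hhcvx j).2 (hwW j) (huW j) (by linarith) ht0 (by ring)
    have hLagEq : ∀ i, φ i (u i) + lam * h i (u i) = φ i (w i) + lam * h i (w i) :=
      fun i => le_antisymm (huMin i _ (hwW i)) (hwMin i _ (huW i))
    set Fh : Fin I → ℝ :=
      fun i => if (i:ℕ) < k then h i (u i) else if (i:ℕ) = k then r else h i (w i) with hFh
    set Fphi : Fin I → ℝ :=
      fun i => if (i:ℕ) < k then φ i (u i) else if (i:ℕ) = k then tphi else φ i (w i) with hFphi
    have hFh_sum : ∑ i, Fh i = (I:ℝ) * K := by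
      have hpt : ∀ i : Fin I, Fh i =
          (1 - t) * (if (i:ℕ) < k then h i (u i) else h i (w i)) +
          t * (if (i:ℕ) < k + 1 then h i (u i) else h i (w i)) := by
        intro i
        by_cases h1 : (i:ℕ) < k
        · simp only [hFh, if_pos h1, if_pos (by omega : (i:ℕ) < k + 1)]; ring
        · by_cases h2 : (i:ℕ) = k
          · have hij : i = j := Fin.ext (by rw [h2, hjval])
            subst hij
            simp only [hFh]
            split_ifs <;> first | (exfalso; omega) | (rw [hr]) | (rw [hr]; ring)
          · simp only [hFh, if_neg h1, if_neg h2,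
              if_neg (by omega : ¬ ((i:ℕ) < k + 1))]; ring
      rw [Finset.sum_congr rfl (fun i _ => hpt i), Finset.sum_add_distrib,
        ← Finset.mul_sum, ← Finset.mul_sum]
      exact hSt
    have hLagF : ∀ i : Fin I, Fphi i + lam * Fh i = φ i (w i) + lam * h i (w i) := by
      intro i
      by_cases h1 : (i:ℕ) < k
      · simp only [hFphi, hFh, if_pos h1]; exact hLagEq i
      · by_cases h2 : (i:ℕ) = k
        · have hij : i = j := Fin.ext (by rw [h2, hjval])
          subst hij
          simp only [hFphi, hFh]
          split_ifs <;>
            first | (exfalso; omega) | (rw [hr, htphi]; linear_combination t * hLagEq j)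
        · simp only [hFphi, hFh, if_neg h1, if_neg h2]
    have hFphi_sum : ∑ i, Fphi i =
        ∑ i, (φ i (w i) + lam * h i (w i)) - lam * ((I:ℝ) * K) := by
      have hsum : ∑ i, (Fphi i + lam * Fh i) = ∑ i, (φ i (w i) + lam * h i (w i)) :=
        Finset.sum_congr rfl (fun i _ => hLagF i)
      rw [Finset.sum_add_distrib, ← Finset.mul_sum, hFh_sum] at hsum
      linarith
    -- two-point relaxation bound
    have hftilde_tphi : ftilde j what ≤ tphi := by
      by_cases hpj : 0 < p j
      · obtain ⟨a, uu, ha0, ha1, huuW, hsumc, hvalc⟩ :=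
          two_point_combo hpj (Wset j) (w j) (u j) (hwW j) (huW j) t ht0 ht1 (φ j)
        rw [hftilde]
        exact csInf_le ⟨φ j (ms 0 j), hftilde_setlb j what⟩
          ⟨a, uu, ha0, ha1, huuW, by rw [hsumc], by rw [hvalc]⟩
      · have hp0 : p j = 0 := by omega
        have hsub : Subsingleton (Fin (p j) → ℝ) :=
          ⟨fun a b => funext (fun z => absurd z.isLt (by omega))⟩
        have hwu : w j = u j := @Subsingleton.elim _ hsub _ _
        have hwhateq : what = w j := @Subsingleton.elim _ hsub _ _
        have htphi_eq : tphi = φ j (w j) := by rw [htphi, ← hwu]; ring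
        rw [hwhateq, htphi_eq]
        exact hftilde_ub j (w j) (hwW j)
    have hfhat_tphi : fhat j what ≤ tphi + Δ j := by
      have := hΔ_ge j what hwhatW
      linarith
    -- pick a near-optimal point in the sublevel set
    have hlt : sInf {v : ℝ | ∃ z ∈ Wset j, h j z ≤ h j what ∧ v = φ j z} <
        fhat j what + ε * I := by
      rw [← hfhat]
      exact lt_add_of_pos_right _ (by positivity)
    obtain ⟨v0, hv0mem, hv0lt⟩ :=
      exists_lt_of_csInf_lt ⟨φ j what, hfhat_mem j what hwhatW⟩ hlt
    obtain ⟨vstar, hvW, hvh, rfl⟩ := hv0mem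
    -- the final feasible point
    set wf : ∀ i : Fin I, Fin (p i) → ℝ :=
      Function.update (fun i => if (i:ℕ) < k then u i else w i) j vstar with hwf
    have hwfj : wf j = vstar := by
      rw [hwf]; simp
    have hwfi : ∀ i, i ≠ j → wf i = if (i:ℕ) < k then u i else w i := by
      intro i hij
      rw [hwf, Function.update_of_ne hij]
    have hne_j : ∀ i : Fin I, (i:ℕ) ≠ k → i ≠ j :=
      fun i hik hij => hik (by rw [hij, hjval])
    have hwfW : ∀ i, wf i ∈ Wset i := by
      intro i
      by_cases hij : i = j
      · rw [hij, hwfj]; exact hvW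
      · rw [hwfi i hij]; split_ifs; exacts [huW i, hwW i]
    have hwfh : ∀ i, h i (wf i) ≤ Fh i := by
      intro i
      by_cases hij : i = j
      · rw [hij, hwfj]
        have hFhj : Fh j = r := by
          simp only [hFh]
          split_ifs <;> first | (exfalso; omega) | rfl
        rw [hFhj]
        exact le_trans hvh hwhath
      · rw [hwfi i hij]
        have hik : (i:ℕ) ≠ k := fun hc => hij (Fin.ext (by rw [hc, hjval]))
        by_cases h1 : (i:ℕ) < k
        · simp only [hFh, if_pos h1, le_refl]
        · simp only [hFh, if_neg h1, if_neg hik, le_refl]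
    have hconstr : ∑ i, h i (wf i) ≤ (I:ℝ) * K :=
      le_trans (Finset.sum_le_sum (fun i _ => hwfh i)) (le_of_eq hFh_sum)
    have hwfphi : ∑ i, φ i (wf i) = ∑ i, Fphi i + (φ j vstar - tphi) := by
      have hpt : ∀ i : Fin I, φ i (wf i) - Fphi i =
          if i = j then φ j vstar - tphi else 0 := by
        intro i
        by_cases hij : i = j
        · rw [if_pos hij]
          subst hij
          rw [hwfj]
          have hFphij : Fphi j = tphi := by
            simp only [hFphi]
            split_ifs <;> first | (exfalso; omega) | rfl
          rw [hFphij]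
        · rw [if_neg hij, hwfi i hij]
          have hik : (i:ℕ) ≠ k := fun hc => hij (Fin.ext (by rw [hc, hjval]))
          by_cases h1 : (i:ℕ) < k
          · simp only [hFphi, if_pos h1, sub_self]
          · simp only [hFphi, if_neg h1, if_neg hik, sub_self]
      have hsub : ∑ i, (φ i (wf i) - Fphi i) = φ j vstar - tphi := by
        rw [Finset.sum_congr rfl (fun i _ => hpt i)]
        rw [Finset.sum_ite_eq' Finset.univ j (fun _ => φ j vstar - tphi)]
        simp
      rw [Finset.sum_sub_distrib] at hsub
      linarith
    have hvchain : φ j vstar - tphi ≤ Δ j + ε * I := by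
      have h1 : fhat j what ≤ tphi + Δ j := hfhat_tphi
      linarith
    have hobj : ∑ i, φ i (wf i) ≤
        ∑ i, (φ i (w i) + lam * h i (w i)) - lam * ((I:ℝ) * K) + (Δ j + ε * I) := by
      rw [hwfphi, hFphi_sum]
      linarith
    have hP1 : infP ≤ (1/I:ℝ) * ∑ i, φ i (wf i) := by
      refine hPmem wf hwfW ?_
      calc (1/I:ℝ) * ∑ i, h i (wf i) ≤ (1/I:ℝ) * ((I:ℝ)*K) :=
            mul_le_mul_of_nonneg_left hconstr (le_of_lt h1Ipos)
        _ = K := by field_simp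
    have hP2 : (1/I:ℝ) * ∑ i, φ i (wf i) ≤
        ((1/I:ℝ) * (∑ i, (φ i (w i) + lam * h i (w i))) - lam * K) + (Δ j + ε * I) / I := by
      have hm := mul_le_mul_of_nonneg_left hobj (le_of_lt h1Ipos)
      have heq : (1/I:ℝ) * (∑ i, (φ i (w i) + lam * h i (w i)) - lam * ((I:ℝ)*K) + (Δ j + ε * I)) =
          ((1/I:ℝ) * (∑ i, (φ i (w i) + lam * h i (w i))) - lam * K) + (Δ j + ε * I) / I := by
        field_simp
      linarith
    have hP3 : ((1/I:ℝ) * (∑ i, (φ i (w i) + lam * h i (w i))) - lam * K) ≤ supD :=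
      le_trans (hd_ge lam w hwW hwMin) (hd_le_supD lam hlam)
    have hP4 : (Δ j + ε * I) / I ≤ Δworst / I + ε := by
      have h5 : (Δ j + ε * I) / I = Δ j / I + ε := by field_simp
      have h6 : Δ j / (I:ℝ) ≤ Δworst / I := by gcongr; exact hΔw_ge j
      linarith
    linarith
  -- compactness: subsequential limits of sequences of parameters
  have cluster : ∀ ws : ℕ → (∀ i : Fin I, Fin (p i) → ℝ), (∀ n i, ws n i ∈ Wset i) →
      ∃ (wst : ∀ i : Fin I, Fin (p i) → ℝ) (σ : ℕ → ℕ), StrictMono σ ∧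
        (∀ i, wst i ∈ Wset i) ∧
        (∀ i, Filter.Tendsto (fun n => φ i (ws (σ n) i)) Filter.atTop (nhds (φ i (wst i)))) ∧
        (∀ i, Filter.Tendsto (fun n => h i (ws (σ n) i)) Filter.atTop (nhds (h i (wst i)))) := by
    intro ws hws
    have hPW : IsCompact (Set.pi Set.univ Wset) := isCompact_univ_pi hWcpt
    have hmem : ∀ n, ws n ∈ Set.pi Set.univ Wset := fun n i _ => hws n i
    obtain ⟨wst, hwstmem, σ, hσ, htend⟩ := hPW.tendsto_subseq hmem
    have hwstW : ∀ i, wst i ∈ Wset i := fun i => hwstmem i (Set.mem_univ i)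
    have hcomp : ∀ i, Filter.Tendsto (fun n => ws (σ n) i) Filter.atTop (nhds (wst i)) :=
      fun i => tendsto_pi_nhds.mp htend i
    refine ⟨wst, σ, hσ, hwstW, ?_, ?_⟩
    · intro i
      have hwithin : Filter.Tendsto (fun n => ws (σ n) i) Filter.atTop
          (nhdsWithin (wst i) (Wset i)) :=
        tendsto_nhdsWithin_iff.mpr ⟨hcomp i, Filter.Eventually.of_forall (fun n => hws _ i)⟩
      exact (hφcont i (wst i) (hwstW i)).tendsto.comp hwithin
    · intro i
      exact ((hhcont i).tendsto (wst i)).comp (hcomp i)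
  -- main inequality
  have hgap2 : infP ≤ supD + Δworst / I := by
    by_cases hJ0 : ∃ w : ∀ i : Fin I, Fin (p i) → ℝ, (∀ i, w i ∈ Wset i) ∧
        (∀ i, ∀ v ∈ Wset i, φ i (w i) + 0 * h i (w i) ≤ φ i v + 0 * h i v) ∧
        (∑ i, h i (w i)) ≤ (I:ℝ) * K
    · obtain ⟨w, hwW, hwMin, hwK⟩ := hJ0
      have h1 : infP ≤ (1/I:ℝ) * ∑ i, φ i (w i) := by
        refine hPmem w hwW ?_
        calc (1/I:ℝ) * ∑ i, h i (w i) ≤ (1/I:ℝ) * ((I:ℝ)*K) :=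
              mul_le_mul_of_nonneg_left hwK (le_of_lt h1Ipos)
          _ = K := by field_simp
      have h2 := le_trans (hd_ge 0 w hwW hwMin) (hd_le_supD 0 (le_refl 0))
      have h3 : (1/I:ℝ) * (∑ i, (φ i (w i) + 0 * h i (w i))) - 0 * K =
          (1/I:ℝ) * ∑ i, φ i (w i) := by simp
      rw [h3] at h2
      have h4 : 0 ≤ Δworst / (I:ℝ) := by positivity
      linarith
    · set J : Set ℝ := {lam | 0 ≤ lam ∧ ∃ w : ∀ i : Fin I, Fin (p i) → ℝ,
        (∀ i, w i ∈ Wset i) ∧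
        (∀ i, ∀ v ∈ Wset i, φ i (w i) + lam * h i (w i) ≤ φ i v + lam * h i v) ∧
        (∑ i, h i (w i)) ≤ (I:ℝ) * K} with hJdef
      by_cases hJne : J.Nonempty
      · -- J nonempty: work at the infimum lamh of J
        have hJbdd : BddBelow J := ⟨0, fun z hz => hz.1⟩
        set lamh := sInf J with hlamh
        have hlamh0 : 0 ≤ lamh := le_csInf hJne (fun z hz => hz.1)
        have happrox : ∀ n : ℕ, ∃ z, z ∈ J ∧ z < lamh + 1/((n:ℝ)+1) := by
          intro n
          obtain ⟨z, hz, hzlt⟩ :=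
            exists_lt_of_csInf_lt hJne (lt_add_of_pos_right lamh (show (0:ℝ) < 1/((n:ℝ)+1) by positivity))
          exact ⟨z, hz, hzlt⟩
        choose lamseq hlamJ hlamlt using happrox
        have hlamge : ∀ n, lamh ≤ lamseq n := fun n => csInf_le hJbdd (hlamJ n)
        have hlamtend : Filter.Tendsto lamseq Filter.atTop (nhds lamh) := by
          have h1n : Filter.Tendsto (fun n : ℕ => lamh + 1/((n:ℝ)+1)) Filter.atTop
              (nhds (lamh + 0)) :=
            tendsto_const_nhds.add tendsto_one_div_add_atTop_nhds_zero_nat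
          rw [add_zero] at h1n
          exact tendsto_of_tendsto_of_tendsto_of_le_of_le tendsto_const_nhds h1n
            hlamge (fun n => le_of_lt (hlamlt n))
        have hJw : ∀ n, ∃ w : ∀ i : Fin I, Fin (p i) → ℝ, (∀ i, w i ∈ Wset i) ∧
            (∀ i, ∀ v ∈ Wset i, φ i (w i) + lamseq n * h i (w i) ≤ φ i v + lamseq n * h i v) ∧
            (∑ i, h i (w i)) ≤ (I:ℝ) * K := fun n => (hlamJ n).2
        choose wsJ hwsJW hwsJMin hwsJK using hJw
        obtain ⟨wst, σ, hσ, hwstW, hφt, hht⟩ := cluster wsJ hwsJW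
        have hlamσ : Filter.Tendsto (fun n => lamseq (σ n)) Filter.atTop (nhds lamh) :=
          hlamtend.comp hσ.tendsto_atTop
        have hwstMin : ∀ i, ∀ v ∈ Wset i,
            φ i (wst i) + lamh * h i (wst i) ≤ φ i v + lamh * h i v := by
          intro i v hv
          exact le_of_tendsto_of_tendsto' ((hφt i).add (hlamσ.mul (hht i)))
            (tendsto_const_nhds.add (hlamσ.mul tendsto_const_nhds))
            (fun n => hwsJMin (σ n) i v hv)
        have hwstK : ∑ i, h i (wst i) ≤ (I:ℝ)*K :=
          le_of_tendsto' (tendsto_finset_sum _ (fun i _ => hht i)) (fun n => hwsJK (σ n))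
        have hlamhpos : 0 < lamh := by
          rcases lt_or_eq_of_le hlamh0 with hpos | heq
          · exact hpos
          · exfalso
            apply hJ0
            refine ⟨wst, hwstW, ?_, hwstK⟩
            intro i v hv
            have hm := hwstMin i v hv
            rw [← heq] at hm
            exact hm
        -- approach lamh strictly from below
        set mu : ℕ → ℝ := fun n => lamh - lamh * (1/((n:ℝ)+2)) with hmu
        have hmunn : ∀ n, 0 ≤ mu n := by
          intro n
          have h2 : (0:ℝ) < (n:ℝ)+2 := by positivity
          have h3 : 1/((n:ℝ)+2) ≤ 1 := by rw [div_le_one h2]; linarith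
          have h4 : lamh * (1/((n:ℝ)+2)) ≤ lamh * 1 :=
            mul_le_mul_of_nonneg_left h3 hlamh0
          simp only [hmu]
          linarith
        have hmult : ∀ n, mu n < lamh := by
          intro n
          have h5 : 0 < lamh * (1/((n:ℝ)+2)) := by positivity
          simp only [hmu]
          linarith
        have hmutend : Filter.Tendsto mu Filter.atTop (nhds lamh) := by
          have h2 := tendsto_one_div_add_atTop_nhds_zero_nat (𝕜 := ℝ) |>.comp (tendsto_add_atTop_nat 1)
          have h3 : ((fun n : ℕ => 1/((n:ℝ)+1)) ∘ fun n => n + 1) =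
              fun n : ℕ => 1/((n:ℝ)+2) := by
            funext n
            simp only [Function.comp]
            push_cast
            ring_nf
          rw [h3] at h2
          have h4 : Filter.Tendsto (fun n : ℕ => lamh - lamh * (1/((n:ℝ)+2))) Filter.atTop
              (nhds (lamh - lamh * 0)) := tendsto_const_nhds.sub (tendsto_const_nhds.mul h2)
          rw [mul_zero, sub_zero] at h4
          exact h4
        have hmuNJ : ∀ n, mu n ∉ J :=
          fun n hmem => absurd (csInf_le hJbdd hmem) (not_le.mpr (hmult n))
        set wsM : ℕ → ∀ i : Fin I, Fin (p i) → ℝ := fun n => ms (mu n) with hwsM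
        have hwsMW : ∀ n i, wsM n i ∈ Wset i := fun n i => hmsW _ i
        have hwsMK : ∀ n, (I:ℝ)*K ≤ ∑ i, h i (wsM n i) := by
          intro n
          by_contra hc
          exact hmuNJ n ⟨hmunn n, wsM n, hwsMW n, fun i => hmsMin (mu n) i,
            le_of_lt (lt_of_not_ge hc)⟩
        obtain ⟨ust, σ', hσ', hustW, hφt', hht'⟩ := cluster wsM hwsMW
        have hmuσ : Filter.Tendsto (fun n => mu (σ' n)) Filter.atTop (nhds lamh) :=
          hmutend.comp hσ'.tendsto_atTop
        have hustMin : ∀ i, ∀ v ∈ Wset i,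
            φ i (ust i) + lamh * h i (ust i) ≤ φ i v + lamh * h i v := by
          intro i v hv
          exact le_of_tendsto_of_tendsto' ((hφt' i).add (hmuσ.mul (hht' i)))
            (tendsto_const_nhds.add (hmuσ.mul tendsto_const_nhds))
            (fun n => hmsMin (mu (σ' n)) i v hv)
        have hustK : (I:ℝ)*K ≤ ∑ i, h i (ust i) :=
          ge_of_tendsto' (tendsto_finset_sum _ (fun i _ => hht' i)) (fun n => hwsMK (σ' n))
        exact mix lamh hlamh0 wst ust hwstW hwstMin hustW hustMin hwstK hustK
      · -- J empty: let the multiplier tend to infinity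
        have hnJ : ∀ lam : ℝ, 0 ≤ lam → ∀ w : ∀ i : Fin I, Fin (p i) → ℝ,
            (∀ i, w i ∈ Wset i) →
            (∀ i, ∀ v ∈ Wset i, φ i (w i) + lam * h i (w i) ≤ φ i v + lam * h i v) →
            (I:ℝ)*K < ∑ i, h i (w i) := by
          intro lam hlam w h1 h2
          by_contra hc
          exact hJne ⟨lam, hlam, w, h1, h2, le_of_not_gt hc⟩
        set C : ℝ := ∑ i, (φ i (zmax i) - φ i (ms 0 i)) with hC
        set ws : ℕ → ∀ i : Fin I, Fin (p i) → ℝ := fun n => ms ((n:ℝ)+1) with hws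
        have hwsW : ∀ n i, ws n i ∈ Wset i := fun n i => hmsW _ i
        have hwbsum : ∑ i, h i (wbar i) ≤ (I:ℝ)*K := by
          have h5 := mul_le_mul_of_nonneg_left hwbK (le_of_lt hIR)
          have h6 : (I:ℝ) * ((1/I:ℝ) * ∑ i, h i (wbar i)) = ∑ i, h i (wbar i) := by
            field_simp
          linarith
        have hwsh : ∀ n : ℕ, ∑ i, h i (ws n i) ≤ (I:ℝ)*K + C * (1/((n:ℝ)+1)) := by
          intro n
          have hl : (0:ℝ) < (n:ℝ)+1 := by positivity
          have hper : ∀ i, h i (ws n i) ≤ h i (wbar i) +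
              (φ i (zmax i) - φ i (ms 0 i)) * (1/((n:ℝ)+1)) := by
            intro i
            have hmin := hmsMin ((n:ℝ)+1) i (wbar i) (hwbW i)
            have hub := hzmax i (wbar i) (hwbW i)
            have hlb := hzmin i (ws n i) (hwsW n i)
            have h6 : ((n:ℝ)+1) * (h i (ws n i) - h i (wbar i)) ≤
                φ i (zmax i) - φ i (ms 0 i) := by
              have : ws n i = ms ((n:ℝ)+1) i := rfl
              rw [this] at hlb ⊢
              linarith
            have h7 := mul_le_mul_of_nonneg_right h6 (le_of_lt (one_div_pos.mpr hl))
            have h8 : ((n:ℝ)+1) * (h i (ws n i) - h i (wbar i)) * (1/((n:ℝ)+1)) =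
                h i (ws n i) - h i (wbar i) := by field_simp
            rw [h8] at h7
            linarith
          calc ∑ i, h i (ws n i) ≤
              ∑ i, (h i (wbar i) + (φ i (zmax i) - φ i (ms 0 i)) * (1/((n:ℝ)+1))) :=
                Finset.sum_le_sum (fun i _ => hper i)
            _ = ∑ i, h i (wbar i) + C * (1/((n:ℝ)+1)) := by
                rw [Finset.sum_add_distrib, hC, Finset.sum_mul]
            _ ≤ (I:ℝ)*K + C * (1/((n:ℝ)+1)) := by linarith
        have hwsφ : ∀ n : ℕ, ∑ i, φ i (ws n i) ≤ (I:ℝ) * supD := by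
          intro n
          have hlamnn : (0:ℝ) ≤ (n:ℝ)+1 := by positivity
          have hgt := hnJ ((n:ℝ)+1) hlamnn (ws n) (hwsW n) (fun i => hmsMin _ i)
          have hd := le_trans (hd_ge ((n:ℝ)+1) (ws n) (hwsW n) (fun i => hmsMin _ i))
            (hd_le_supD _ hlamnn)
          have hsplit : ∑ i, (φ i (ws n i) + ((n:ℝ)+1) * h i (ws n i)) =
              ∑ i, φ i (ws n i) + ((n:ℝ)+1) * ∑ i, h i (ws n i) := by
            rw [Finset.sum_add_distrib, Finset.mul_sum]
          have hmul := mul_le_mul_of_nonneg_left hd (le_of_lt hIR)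
          have hId : (I:ℝ) * ((1/I:ℝ) * (∑ i, (φ i (ws n i) + ((n:ℝ)+1) * h i (ws n i))) -
              ((n:ℝ)+1) * K) =
              ∑ i, (φ i (ws n i) + ((n:ℝ)+1) * h i (ws n i)) - ((n:ℝ)+1)*((I:ℝ)*K) := by
            field_simp
          rw [hId] at hmul
          have h9 : ((n:ℝ)+1) * ((I:ℝ)*K - ∑ i, h i (ws n i)) ≤ 0 :=
            mul_nonpos_of_nonneg_of_nonpos hlamnn (by linarith)
          nlinarith [hmul, hsplit, h9]
        obtain ⟨wst, σ, hσ, hwstW, hφt, hht⟩ := cluster ws hwsW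
        have h1n : Filter.Tendsto (fun n => 1/(((σ n):ℝ)+1)) Filter.atTop (nhds 0) := by
          have h2 := tendsto_one_div_add_atTop_nhds_zero_nat (𝕜 := ℝ) |>.comp hσ.tendsto_atTop
          exact h2
        have hsumh : Filter.Tendsto (fun n => ∑ i, h i (ws (σ n) i)) Filter.atTop
            (nhds (∑ i, h i (wst i))) := tendsto_finset_sum _ (fun i _ => hht i)
        have hsumφ : Filter.Tendsto (fun n => ∑ i, φ i (ws (σ n) i)) Filter.atTop
            (nhds (∑ i, φ i (wst i))) := tendsto_finset_sum _ (fun i _ => hφt i)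
        have hlim : Filter.Tendsto (fun n => (I:ℝ)*K + C * (1/(((σ n):ℝ)+1))) Filter.atTop
            (nhds ((I:ℝ)*K + C * 0)) := tendsto_const_nhds.add (tendsto_const_nhds.mul h1n)
        rw [mul_zero, add_zero] at hlim
        have hwsthK : ∑ i, h i (wst i) ≤ (I:ℝ)*K :=
          le_of_tendsto_of_tendsto' hsumh hlim (fun n => hwsh (σ n))
        have hwstφ : ∑ i, φ i (wst i) ≤ (I:ℝ)*supD :=
          le_of_tendsto' hsumφ (fun n => hwsφ (σ n))
        have h1 : infP ≤ (1/I:ℝ) * ∑ i, φ i (wst i) := by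
          refine hPmem wst hwstW ?_
          calc (1/I:ℝ) * ∑ i, h i (wst i) ≤ (1/I:ℝ) * ((I:ℝ)*K) :=
                mul_le_mul_of_nonneg_left hwsthK (le_of_lt h1Ipos)
            _ = K := by field_simp
        have h2 : (1/I:ℝ) * ∑ i, φ i (wst i) ≤ supD := by
          have h5 := mul_le_mul_of_nonneg_left hwstφ (le_of_lt h1Ipos)
          have hid : (1/I:ℝ)*((I:ℝ)*supD) = supD := by field_simp
          linarith
        have h4 : 0 ≤ Δworst / (I:ℝ) := by positivity
        linarith
  refine ⟨by linarith, ?_⟩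
  have h0 : Δworst/(I:ℝ) = (1/I:ℝ)*Δworst := by ring
  have h1 : (1/I:ℝ) ≤ 2/I := by gcongr <;> norm_num
  have h2 : (1/I:ℝ)*Δworst ≤ (2/I:ℝ)*Δworst := mul_le_mul_of_nonneg_right h1 hΔwnn
  linarith
end

section
/- For the Minkowski average of I copies of a fixed compact set A ⊆ R^m, i.e., A_I = {(1/I)Σ_{j=1}^I a_j : a_j ∈ A}, the Hausdorff distance between A_I and conv(A) tends to 0 as I → ∞; in fact d_H(A_I, conv(A)) ≤ C/√I · diam(A) for an absolute constant depending only on m (and A_I ⊆ conv(A) for all I). -/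
open scoped Pointwise BigOperators

private lemma nsmul_mem_nsmul_set {E : Type*} [AddCommMonoid E] {A : Set E} {x : E}
    (hx : x ∈ A) : ∀ n : ℕ, n • x ∈ n • A
  | 0 => by
      rw [zero_nsmul, zero_nsmul]
      simp [Set.mem_zero]
  | n + 1 => by
      rw [succ_nsmul, succ_nsmul]
      exact Set.add_mem_add (nsmul_mem_nsmul_set hx n) hx

private lemma sum_nsmul_mem_sum_nsmul {E : Type*} [AddCommMonoid E] {A : Set E} {ι : Type*}
    (s : Finset ι) (k : ι → ℕ) (z : ι → E) (hz : ∀ i ∈ s, z i ∈ A) :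
    (∑ i ∈ s, k i • z i) ∈ (∑ i ∈ s, k i) • A := by
  classical
  induction s using Finset.induction_on with
  | empty => simp [Set.mem_zero]
  | insert _ _ ha ih =>
    rw [Finset.sum_insert ha, Finset.sum_insert ha, add_nsmul]
    exact Set.add_mem_add (nsmul_mem_nsmul_set (hz _ (Finset.mem_insert_self _ _)) _)
      (ih fun i hi => hz i (Finset.mem_insert_of_mem hi))

private lemma convex_nsmul_eq {E : Type*} [AddCommGroup E] [Module ℝ E] {s : Set E}
    (hs : Convex ℝ s) (hne : s.Nonempty) : ∀ n : ℕ, n • s = (n : ℝ) • s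
  | 0 => by
      rw [zero_nsmul, Nat.cast_zero, Set.zero_smul_set hne]
  | n + 1 => by
      rw [succ_nsmul, convex_nsmul_eq hs hne n, Nat.cast_succ,
        hs.add_smul (Nat.cast_nonneg n) zero_le_one, one_smul]

private lemma avg_subset_convexHull {m : ℕ} {A : Set (EuclideanSpace ℝ (Fin m))}
    (hA : A.Nonempty) {I : ℕ} (hI : 0 < I) :
    ((I : ℝ)⁻¹ • ∑ _j ∈ Finset.range I, A) ⊆ convexHull ℝ A := by
  have hconv : Convex ℝ (convexHull ℝ A) := convex_convexHull ℝ A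
  have hne : (convexHull ℝ A).Nonempty := hA.mono (subset_convexHull ℝ A)
  have h1 : (∑ _j ∈ Finset.range I, A) ⊆ (I : ℝ) • convexHull ℝ A := by
    calc (∑ _j ∈ Finset.range I, A) ⊆ convexHull ℝ (∑ _j ∈ Finset.range I, A) :=
          subset_convexHull ℝ _
      _ = ∑ _j ∈ Finset.range I, convexHull ℝ A := convexHull_sum _ _
      _ = I • convexHull ℝ A := by rw [Finset.sum_const, Finset.card_range]
      _ = (I : ℝ) • convexHull ℝ A := convex_nsmul_eq hconv hne I
  calc ((I : ℝ)⁻¹ • ∑ _j ∈ Finset.range I, A)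
      ⊆ (I : ℝ)⁻¹ • (I : ℝ) • convexHull ℝ A := Set.smul_set_mono h1
    _ = convexHull ℝ A := by
        rw [← mul_smul, inv_mul_cancel₀ (by positivity : (I : ℝ) ≠ 0), one_smul]

/-- Key approximation: every point of the convex hull is within `(2m+3)/I · diam A`
of the Minkowski average. -/
private lemma exists_avg_close {m : ℕ} {A : Set (EuclideanSpace ℝ (Fin m))}
    (hA : Bornology.IsBounded A) {x : EuclideanSpace ℝ (Fin m)}
    (hx : x ∈ convexHull ℝ A) {I : ℕ} (hI : 0 < I) :
    ∃ y ∈ ((I : ℝ)⁻¹ • ∑ _j ∈ Finset.range I, A),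
      dist x y ≤ (2 * m + 3) / I * Metric.diam A := by
  classical
  obtain ⟨ι, hι, z, w, hzA, hai, hw0, hw1, hxw⟩ := eq_pos_convex_span_of_mem_convexHull hx
  have hIpos : (0 : ℝ) < I := by positivity
  -- ι is nonempty
  haveI hne : Nonempty ι := by
    rcases isEmpty_or_nonempty ι with h | h
    · simp [Finset.univ_eq_empty] at hw1
    · exact h
  -- cardinality bound via Carathéodory (affine independence)
  have hcard : (Fintype.card ι : ℝ) ≤ m + 1 := by
    have h1 : Fintype.card ι ≤ Module.finrank ℝ (vectorSpan ℝ (Set.range z)) + 1 :=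
      hai.card_le_finrank_succ
    have h2 : Module.finrank ℝ (vectorSpan ℝ (Set.range z)) ≤ m := by
      have := Submodule.finrank_le (vectorSpan ℝ (Set.range z))
      rwa [finrank_euclideanSpace_fin] at this
    have : Fintype.card ι ≤ m + 1 := h1.trans (by omega)
    exact_mod_cast this
  -- floor approximation of the weights
  set k0 : ι → ℕ := fun i => ⌊(I : ℝ) * w i⌋₊ with hk0
  have hfl : ∀ i, (k0 i : ℝ) ≤ (I : ℝ) * w i := fun i =>
    Nat.floor_le (mul_nonneg (le_of_lt (by positivity)) (hw0 i).le)
  have hfu : ∀ i, (I : ℝ) * w i < (k0 i : ℝ) + 1 := fun i => Nat.lt_floor_add_one _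
  set S : ℕ := ∑ i, k0 i with hS
  have hSle : S ≤ I := by
    have : (S : ℝ) ≤ (I : ℝ) := by
      rw [hS]
      push_cast
      calc (∑ i, (k0 i : ℝ)) ≤ ∑ i, (I : ℝ) * w i := Finset.sum_le_sum fun i _ => hfl i
        _ = (I : ℝ) * ∑ i, w i := by rw [Finset.mul_sum]
        _ = (I : ℝ) := by rw [hw1, mul_one]
    exact_mod_cast this
  have hIS : ((I - S : ℕ) : ℝ) ≤ (m : ℝ) + 1 := by
    have hcast : ((I - S : ℕ) : ℝ) = (I : ℝ) - (S : ℝ) := by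
      rw [Nat.cast_sub hSle]
    have hsum : (I : ℝ) - (S : ℝ) ≤ (Fintype.card ι : ℝ) := by
      have : (I : ℝ) - (S : ℝ) = ∑ i, ((I : ℝ) * w i - (k0 i : ℝ)) := by
        rw [Finset.sum_sub_distrib, ← Finset.mul_sum, hw1, mul_one, hS]
        push_cast
        ring
      rw [this]
      calc (∑ i, ((I : ℝ) * w i - (k0 i : ℝ))) ≤ ∑ _i : ι, (1 : ℝ) :=
            Finset.sum_le_sum fun i _ => by have := hfu i; linarith
        _ = (Fintype.card ι : ℝ) := by simp
    rw [hcast]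
    exact hsum.trans hcard
  obtain ⟨i0⟩ := hne
  set k : ι → ℕ := fun i => k0 i + if i = i0 then I - S else 0 with hk
  have hksum : (∑ i, k i) = I := by
    rw [hk]
    rw [Finset.sum_add_distrib, Finset.sum_ite_eq' Finset.univ i0 fun _ => I - S]
    simp [← hS, Nat.add_sub_cancel' hSle]
  -- the approximating point
  set y : EuclideanSpace ℝ (Fin m) := (I : ℝ)⁻¹ • ∑ i, k i • z i with hy
  have hymem : y ∈ ((I : ℝ)⁻¹ • ∑ _j ∈ Finset.range I, A) := by
    have h1 : (∑ i, k i • z i) ∈ (∑ i, k i) • A :=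
      sum_nsmul_mem_sum_nsmul Finset.univ k z fun i _ => hzA (Set.mem_range_self i)
    rw [hksum] at h1
    rw [Finset.sum_const, Finset.card_range]
    exact Set.smul_mem_smul_set h1
  refine ⟨y, hymem, ?_⟩
  -- rewrite y as a convex-like combination
  have hy' : y = ∑ i, ((k i : ℝ) / I) • z i := by
    rw [hy, Finset.smul_sum]
    refine Finset.sum_congr rfl fun i _ => ?_
    rw [← Nat.cast_smul_eq_nsmul ℝ, ← mul_smul, div_eq_mul_inv, mul_comm]
  set c : ι → ℝ := fun i => w i - (k i : ℝ) / I with hc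
  have hcsum : (∑ i, c i) = 0 := by
    rw [hc]
    rw [Finset.sum_sub_distrib, hw1, ← Finset.sum_div]
    have : (∑ i, (k i : ℝ)) = (I : ℝ) := by exact_mod_cast congrArg (Nat.cast (R := ℝ)) hksum
    rw [this, div_self (ne_of_gt hIpos), sub_self]
  have hxy : x - y = ∑ i, c i • (z i - z i0) := by
    have h1 : x - y = ∑ i, c i • z i := by
      rw [← hxw, hy', ← Finset.sum_sub_distrib]
      exact Finset.sum_congr rfl fun i _ => by rw [hc, sub_smul]
    have h2 : (∑ i, c i • (z i - z i0)) = (∑ i, c i • z i) - (∑ i, c i) • z i0 := by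
      rw [Finset.sum_smul, ← Finset.sum_sub_distrib]
      exact Finset.sum_congr rfl fun i _ => by rw [smul_sub]
    rw [h2, hcsum, zero_smul, sub_zero, h1]
  -- bound on each coefficient
  have hdiam : ∀ i, ‖z i - z i0‖ ≤ Metric.diam A := fun i => by
    rw [← dist_eq_norm]
    exact Metric.dist_le_diam_of_mem hA (hzA (Set.mem_range_self i)) (hzA (Set.mem_range_self i0))
  have hcb : ∀ i, |c i| ≤ 1 / I + (if i = i0 then ((m : ℝ) + 1) / I else 0) := by
    intro i
    have hb0 : |w i - (k0 i : ℝ) / I| ≤ 1 / I := by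
      have h1 : (k0 i : ℝ) / I ≤ w i := by
        rw [div_le_iff₀ hIpos]; nlinarith [hfl i]
      have h2 : w i ≤ (k0 i : ℝ) / I + 1 / I := by
        have : w i ≤ ((k0 i : ℝ) + 1) / I := by
          rw [le_div_iff₀ hIpos]; nlinarith [hfu i]
        have he : ((k0 i : ℝ) + 1) / I = (k0 i : ℝ) / I + 1 / I := by ring
        linarith [he ▸ this]
      rw [abs_sub_le_iff]
      exact ⟨by linarith, by linarith⟩
    have hsplit : c i = (w i - (k0 i : ℝ) / I) - (if i = i0 then ((I - S : ℕ) : ℝ) else 0) / I := by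
      rw [hc, hk]
      push_cast
      split <;> ring
    rw [hsplit]
    have habs : |(w i - (k0 i : ℝ) / I) - (if i = i0 then ((I - S : ℕ) : ℝ) else 0) / I|
        ≤ |w i - (k0 i : ℝ) / I| + |(if i = i0 then ((I - S : ℕ) : ℝ) else 0) / I| :=
      abs_sub _ _
    refine habs.trans (add_le_add hb0 ?_)
    split
    · rw [abs_of_nonneg (by positivity)]
      gcongr
    · simp
  -- total bound
  have hsum_c : (∑ i, |c i|) ≤ (2 * m + 3) / I := by
    calc (∑ i, |c i|) ≤ ∑ i, (1 / I + (if i = i0 then ((m : ℝ) + 1) / I else 0)) :=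
          Finset.sum_le_sum fun i _ => hcb i
      _ = (Fintype.card ι : ℝ) * (1 / I) + ((m : ℝ) + 1) / I := by
          rw [Finset.sum_add_distrib, Finset.sum_const, Finset.sum_ite_eq' Finset.univ i0]
          simp [nsmul_eq_mul]
      _ ≤ ((m : ℝ) + 1) * (1 / I) + ((m : ℝ) + 1) / I := by
          have h1 : (0:ℝ) ≤ 1 / I := by positivity
          have h2 := mul_le_mul_of_nonneg_right hcard h1
          linarith
      _ ≤ (2 * m + 3) / I := by
          rw [mul_one_div, ← add_div, div_le_div_iff₀ hIpos hIpos]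
          nlinarith [hIpos]
  calc dist x y = ‖x - y‖ := dist_eq_norm x y
    _ = ‖∑ i, c i • (z i - z i0)‖ := by rw [hxy]
    _ ≤ ∑ i, ‖c i • (z i - z i0)‖ := norm_sum_le _ _
    _ ≤ ∑ i, |c i| * Metric.diam A := Finset.sum_le_sum fun i _ => by
        rw [norm_smul, Real.norm_eq_abs]
        exact mul_le_mul_of_nonneg_left (hdiam i) (abs_nonneg _)
    _ = (∑ i, |c i|) * Metric.diam A := by rw [Finset.sum_mul]
    _ ≤ (2 * m + 3) / I * Metric.diam A := by
        exact mul_le_mul_of_nonneg_right hsum_c Metric.diam_nonneg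

/-- **Convexification of Minkowski averages (Shapley–Folkman–Starr).** For a nonempty compact
set `A ⊆ ℝ^m`, the Minkowski average `A_I = {(1/I) Σ_{j=1}^I a_j : a_j ∈ A}` is contained in
`conv A`, its Hausdorff distance to `conv A` is at most `C/√I · diam A` for a constant `C`
depending only on `m`, and in particular it tends to `0` as `I → ∞`. -/
theorem minkowski_average_convexifies (m : ℕ) :
    ∃ C : ℝ, 0 < C ∧
      ∀ A : Set (EuclideanSpace ℝ (Fin m)), IsCompact A → A.Nonempty →
        (∀ I : ℕ, 0 < I →
          ((I : ℝ)⁻¹ • ∑ _j ∈ Finset.range I, A) ⊆ convexHull ℝ A) ∧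
        (∀ I : ℕ, 0 < I →
          Metric.hausdorffDist ((I : ℝ)⁻¹ • ∑ _j ∈ Finset.range I, A) (convexHull ℝ A) ≤
            C / Real.sqrt I * Metric.diam A) ∧
        Filter.Tendsto
          (fun I : ℕ =>
            Metric.hausdorffDist ((I : ℝ)⁻¹ • ∑ _j ∈ Finset.range I, A) (convexHull ℝ A))
          Filter.atTop (nhds 0) := by
  refine ⟨2 * m + 3, by positivity, fun A hAc hAne => ?_⟩
  have hAb : Bornology.IsBounded A := hAc.isBounded
  have hsub : ∀ I : ℕ, 0 < I →
      ((I : ℝ)⁻¹ • ∑ _j ∈ Finset.range I, A) ⊆ convexHull ℝ A :=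
    fun I hI => avg_subset_convexHull hAne hI
  have hcore : ∀ I : ℕ, 0 < I →
      Metric.hausdorffDist ((I : ℝ)⁻¹ • ∑ _j ∈ Finset.range I, A) (convexHull ℝ A) ≤
        (2 * m + 3) / I * Metric.diam A := by
    intro I hI
    have hdnn : (0 : ℝ) ≤ Metric.diam A := Metric.diam_nonneg
    have hr : (0 : ℝ) ≤ (2 * m + 3) / I * Metric.diam A := by positivity
    refine Metric.hausdorffDist_le_of_mem_dist hr ?_ ?_
    · intro xx hxx
      exact ⟨xx, hsub I hI hxx, by simpa using hr⟩
    · intro xx hxx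
      obtain ⟨y, hy, hd⟩ := exists_avg_close hAb hxx hI
      exact ⟨y, hy, hd⟩
  refine ⟨hsub, fun I hI => ?_, ?_⟩
  · refine (hcore I hI).trans ?_
    have hI1 : (1 : ℝ) ≤ (I : ℝ) := by exact_mod_cast hI
    have hs : Real.sqrt I ≤ (I : ℝ) :=
      (Real.sqrt_le_left (by linarith)).mpr (by nlinarith)
    have hspos : 0 < Real.sqrt I := Real.sqrt_pos.mpr (by linarith)
    have h2 : (2 * (m : ℝ) + 3) / I ≤ (2 * m + 3) / Real.sqrt I :=
      div_le_div_of_nonneg_left (by positivity) hspos hs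
    exact mul_le_mul_of_nonneg_right h2 Metric.diam_nonneg
  · refine squeeze_zero' (Filter.Eventually.of_forall fun I => Metric.hausdorffDist_nonneg)
      ?_ (tendsto_const_div_atTop_nhds_zero_nat ((2 * m + 3) * Metric.diam A))
    filter_upwards [Filter.eventually_gt_atTop 0] with I hI
    refine (hcore I hI).trans ?_
    rw [div_mul_eq_mul_div]
end
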